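/- arXiv:2410.16725 — 4 statements merged into one kernel-verified Lean document; each statement's English description precedes it below -/
import Mathlib

section
/- Let m, c ∈ ℝ with 0 ≤ c ≤ m, and let t₀ be a real number satisfying t₀³ − t₀² − t₀ − 1 = 0. Then for every λ ∈ ℂ with Im λ ≠ 0 and |Im λ| > t₀·m, one has |Im λ| > m and |σ_λ + c/λ| < 2/(1 + (m/|Im λ|)²), where σ_λ = 1 if Re λ ≥ 0 and σ_λ = −1 if Re λ < 0. Equivalently, the set C = {λ ∈ ℂ∖ℝ : not (|Im λ| > m and |σ_λ + c/λ| < 2/(1 + (m/|Im λ|)²))} is contained in {λ : 0 < |Im λ| ≤ t₀·m}. -/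
open Complex

noncomputable section

/-- The region `Γ` determined by parameters `m` and `c`:
`λ ∈ ℂ∖ℝ` with `|Im λ| > m` and `|σ_λ + c/λ| < 2/(1 + (m/|Im λ|)²)`,
where `σ_λ = 1` if `Re λ ≥ 0` and `σ_λ = −1` otherwise. -/
def GammaSet (m c : ℝ) : Set ℂ :=
  {l | l.im ≠ 0 ∧ m < |l.im| ∧
    ‖(if 0 ≤ l.re then (1 : ℂ) else -1) + (c : ℂ) / l‖ < 2 / (1 + (m / |l.im|) ^ 2)}

/-- `C = (ℂ∖ℝ) ∖ Γ`. -/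
def CSet (m c : ℝ) : Set ℂ := {l : ℂ | l.im ≠ 0} \ GammaSet m c

/-- Proposition 1.1: if `t₀` is a real zero of `t³ − t² − t − 1`, then every non-real `λ`
with `|Im λ| > t₀·m` lies in `Γ`; equivalently `C ⊆ {λ : 0 < |Im λ| ≤ t₀·m}`. -/
theorem statement0 (m c t₀ : ℝ) (hc0 : 0 ≤ c) (hcm : c ≤ m)
    (ht : t₀ ^ 3 - t₀ ^ 2 - t₀ - 1 = 0) :
    (∀ l : ℂ, l.im ≠ 0 → t₀ * m < |l.im| →
      m < |l.im| ∧
        ‖(if 0 ≤ l.re then (1 : ℂ) else -1) + (c : ℂ) / l‖ <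
          2 / (1 + (m / |l.im|) ^ 2)) ∧
    CSet m c ⊆ {l : ℂ | 0 < |l.im| ∧ |l.im| ≤ t₀ * m} := by
  have hm0 : 0 ≤ m := hc0.trans hcm
  have ht1 : 1 < t₀ := by nlinarith [sq_nonneg t₀, sq_nonneg (t₀ - 1), sq_nonneg (t₀ + 1)]
  have main : ∀ l : ℂ, l.im ≠ 0 → t₀ * m < |l.im| →
      m < |l.im| ∧
        ‖(if 0 ≤ l.re then (1 : ℂ) else -1) + (c : ℂ) / l‖ <
          2 / (1 + (m / |l.im|) ^ 2) := by
    intro l him hlt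
    set y := |l.im| with hy
    have hy0 : 0 < y := abs_pos.mpr him
    have hmy : m < y := by nlinarith
    refine ⟨hmy, ?_⟩
    set s := m / y with hs
    have hs0 : 0 ≤ s := div_nonneg hm0 hy0.le
    have hts : t₀ * s < 1 := by
      rw [hs, ← mul_div_assoc, div_lt_one hy0]; exact hlt
    -- key polynomial inequality : (1+s)*(1+s^2) < 2
    have hkey : (1 + s) * (1 + s ^ 2) < 2 := by
      nlinarith [mul_pos (mul_pos (sub_pos.mpr hts) (by positivity : (0:ℝ) < t₀ ^ 2))
          (by positivity : (0:ℝ) < t₀),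
        mul_nonneg (mul_nonneg hs0 hs0) hs0, sq_nonneg (t₀ * s - 1), sq_nonneg (t₀ * s + 1),
        mul_nonneg hs0 (sq_nonneg (t₀ * s - 1)), mul_nonneg hs0 (sq_nonneg (t₀ * s + 1)),
        sq_nonneg s, mul_pos (mul_pos (by linarith : (0:ℝ) < t₀) (by linarith : (0:ℝ) < t₀))
          (by linarith : (0:ℝ) < t₀)]
    have hl0 : l ≠ 0 := fun h => him (by simp [h])
    have habsl : y ≤ ‖l‖ := Complex.abs_im_le_norm l
    have hbound : ‖(if 0 ≤ l.re then (1 : ℂ) else -1) + (c : ℂ) / l‖ ≤ 1 + s := by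
      have h1 : ‖(if 0 ≤ l.re then (1 : ℂ) else -1) + (c : ℂ) / l‖
          ≤ ‖if 0 ≤ l.re then (1 : ℂ) else -1‖ + ‖(c : ℂ) / l‖ :=
        norm_add_le _ _
      have h2 : ‖if 0 ≤ l.re then (1 : ℂ) else -1‖ = 1 := by
        split <;> simp
      have h3 : ‖(c : ℂ) / l‖ = c / ‖l‖ := by
        rw [norm_div, Complex.norm_real, Real.norm_of_nonneg hc0]
      have h4 : c / ‖l‖ ≤ m / y := by
        apply div_le_div₀ hm0 hcm hy0 habsl
      calc ‖(if 0 ≤ l.re then (1 : ℂ) else -1) + (c : ℂ) / l‖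
          ≤ 1 + c / ‖l‖ := by rw [← h2, ← h3]; exact h1
        _ ≤ 1 + s := by rw [hs]; linarith
    have hfin : 1 + s < 2 / (1 + s ^ 2) := by
      rw [lt_div_iff₀ (by positivity)]
      linarith [hkey]
    calc ‖(if 0 ≤ l.re then (1 : ℂ) else -1) + (c : ℂ) / l‖
        ≤ 1 + s := hbound
      _ < 2 / (1 + s ^ 2) := hfin
  refine ⟨main, ?_⟩
  intro l hl
  obtain ⟨him, hnot⟩ := hl
  refine ⟨abs_pos.mpr him, ?_⟩
  by_contra h
  push_neg at h
  exact hnot ⟨him, (main l him h).1, (main l him h).2⟩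
end
end

section
/- Let T be a closed symmetric linear relation in a Krein space H with canonical decomposition H = H⁻[⊕]H⁺ such that H⁻ ⊆ D_T, and let L_T = {x : ∃ y ∈ closure(D_T), (x,y) ∈ T}. Then the following are equivalent: (a) H⁻ ⊆ L_T; (b) T_s x ∈ closure(D_T) for every x ∈ H⁻; (c) T_s x ∈ closure(D_T + Ind T) for every x ∈ H⁻. Moreover, if (a)–(c) hold, then L_T = D_T if and only if T_s x ∈ closure(D_T + Ind T) for every x ∈ H⁺ ∩ D_T. -/
open Complex

noncomputable section

variable {H : Type*} [NormedAddCommGroup H] [InnerProductSpace ℂ H] [CompleteSpace H]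

/-- Indefinite inner product `[x,y] = ⟪x, J y⟫`. -/
def kip (J : H →L[ℂ] H) (x y : H) : ℂ := inner ℂ x (J y)

/-- `H⁻ = ker (J + id)`. -/
def negSet (J : H →L[ℂ] H) : Set H := {x | J x = -x}

/-- `H⁺ = ker (J - id)`. -/
def posSet (J : H →L[ℂ] H) : Set H := {x | J x = x}

/-- The canonical projection `P⁻ = (id - J)/2` onto `H⁻`. -/
def Pm (J : H →L[ℂ] H) (x : H) : H := (2⁻¹ : ℂ) • (x - J x)

/-- The canonical projection `P⁺ = (id + J)/2` onto `H⁺`. -/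
def Pp (J : H →L[ℂ] H) (x : H) : H := (2⁻¹ : ℂ) • (x + J x)

/-- `J` is a fundamental symmetry: self-adjoint and an involution. -/
structure IsFundSym (J : H →L[ℂ] H) : Prop where
  symm : ∀ x y : H, (inner ℂ (J x) y : ℂ) = inner ℂ x (J y)
  invol : ∀ x : H, J (J x) = x

def domSet (A : Set (H × H)) : Set H := {x | ∃ y, (x, y) ∈ A}
def ranSet (A : Set (H × H)) : Set H := {y | ∃ x, (x, y) ∈ A}
def mulSet (A : Set (H × H)) : Set H := {y | ((0 : H), y) ∈ A}
def kerl (A : Set (H × H)) (l : ℂ) : Set H := {x | (x, l • x) ∈ A}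
def pointSpec (A : Set (H × H)) : Set ℂ := {l | ∃ x : H, x ≠ 0 ∧ (x, l • x) ∈ A}
/-- The relation `A - l·I`. -/
def shiftRel (A : Set (H × H)) (l : ℂ) : Set (H × H) := {p | ∃ q ∈ A, p = (q.1, q.2 - l • q.1)}
def invRel (A : Set (H × H)) : Set (H × H) := {p | (p.2, p.1) ∈ A}
/-- Composition `A ∘ B` (apply `B` first). -/
def relComp (A B : Set (H × H)) : Set (H × H) := {p | ∃ y, (p.1, y) ∈ B ∧ (y, p.2) ∈ A}
def imageRel (A : Set (H × H)) (M : Set H) : Set H := {y | ∃ x ∈ M, (x, y) ∈ A}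
def setSum (A B : Set H) : Set H := {z | ∃ a ∈ A, ∃ b ∈ B, z = a + b}
/-- The relation `JT = {(x, Jy) : (x,y) ∈ T}`. -/
def JRel (J : H →L[ℂ] H) (A : Set (H × H)) : Set (H × H) := {p | ∃ q ∈ A, p = (q.1, J q.2)}
/-- Krein-space adjoint `T^c`. -/
def adjRel (J : H →L[ℂ] H) (T : Set (H × H)) : Set (H × H) :=
  {q | ∀ p ∈ T, kip J q.2 p.1 = kip J q.1 p.2}
def IsSymRel (J : H →L[ℂ] H) (T : Set (H × H)) : Prop := T ⊆ adjRel J T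
def IsDissipative (J : H →L[ℂ] H) (T : Set (H × H)) : Prop := ∀ p ∈ T, 0 ≤ (kip J p.1 p.2).im
/-- The operator part `T_s = {(x,y) ∈ T : y ⟂ Ind T}`. -/
def opPart (T : Set (H × H)) : Set (H × H) :=
  {p | p ∈ T ∧ ∀ z ∈ mulSet T, (inner ℂ p.2 z : ℂ) = 0}
/-- `‖T_s P⁻‖`: norm of `x ↦ T_s x` as an operator on `H⁻`. -/
def normTsPm (J : H →L[ℂ] H) (T : Set (H × H)) : ℝ :=
  sSup {r | ∃ p ∈ opPart T, p.1 ∈ negSet J ∧ ‖p.1‖ ≤ 1 ∧ r = ‖p.2‖}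
/-- `‖P⁻ T_s P⁻‖`: norm of `x ↦ P⁻(T_s x)` as an operator on `H⁻`. -/
def normPmTsPm (J : H →L[ℂ] H) (T : Set (H × H)) : ℝ :=
  sSup {r | ∃ p ∈ opPart T, p.1 ∈ negSet J ∧ ‖p.1‖ ≤ 1 ∧ r = ‖Pm J p.2‖}
lemma mem_closure_setSum' {D Ms : Set H} {a m : H} (ha : a ∈ closure D) (hm : m ∈ Ms) :
    a + m ∈ closure (setSum D Ms) := by
  have hc : Continuous fun t : H => t + m := continuous_id.add continuous_const
  have h1 : (fun t : H => t + m) a ∈ closure ((fun t : H => t + m) '' D) :=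
    image_closure_subset_closure_image hc (Set.mem_image_of_mem _ ha)
  refine closure_mono ?_ h1
  rintro _ ⟨d, hd, rfl⟩
  exact ⟨d, hd, m, hm, rfl⟩

lemma key_proj (M : Submodule ℂ H) [CompleteSpace M] (D : Set H)
    (hDM : ∀ d ∈ D, d ∈ Mᗮ) (y : H)
    (hy : y ∈ closure (setSum D (M : Set H)))
    (hyo : y ∈ Mᗮ) : y ∈ closure D := by
  set f : H →L[ℂ] H := ContinuousLinearMap.id ℂ H - M.subtypeL.comp (M.orthogonalProjectionOnto)
    with hf
  have hfx : ∀ x : H, f x = x - (M.orthogonalProjectionOnto x : H) := fun x => rfl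
  have himg : f '' setSum D (M : Set H) ⊆ D := by
    rintro _ ⟨z, ⟨a, ha, b, hb, rfl⟩, rfl⟩
    have hpa : M.orthogonalProjectionOnto a = 0 :=
      Submodule.orthogonalProjectionOnto_apply_of_mem_orthogonal (hDM a ha)
    have hpb : (M.orthogonalProjectionOnto b : H) = b := Submodule.starProjection_eq_self_iff.2 hb
    have : f (a + b) = a := by
      rw [hfx, map_add, Submodule.coe_add, hpa, hpb, Submodule.coe_zero, zero_add,
        add_sub_cancel_right]
    rw [this]; exact ha
  have h1 : f y ∈ closure (f '' setSum D (M : Set H)) :=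
    image_closure_subset_closure_image f.continuous (Set.mem_image_of_mem _ hy)
  have h2 : f y ∈ closure D := closure_mono himg h1
  have hpy : M.orthogonalProjectionOnto y = 0 :=
    Submodule.orthogonalProjectionOnto_apply_of_mem_orthogonal hyo
  rwa [hfx, hpy, Submodule.coe_zero, sub_zero] at h2

/-- Proposition 5.1: with `L_T = T⁻¹(closure D_T)`, the conditions
(a) `H⁻ ⊆ L_T`, (b) `T_s(H⁻) ⊆ closure D_T`, (c) `T_s(H⁻) ⊆ closure (D_T + Ind T)`
are equivalent; and if they hold then `L_T = D_T` iff
`T_s(H⁺ ∩ D_T) ⊆ closure (D_T + Ind T)`. -/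
theorem statement16 (J : H →L[ℂ] H) (hJ : IsFundSym J)
    (T : Submodule ℂ (H × H))
    (hTclosed : IsClosed (T : Set (H × H)))
    (hTsym : IsSymRel J (T : Set (H × H)))
    (hdom : negSet J ⊆ domSet (T : Set (H × H))) :
    ((negSet J ⊆ {x : H | ∃ y ∈ closure (domSet (T : Set (H × H))), (x, y) ∈ T}) ↔
      (∀ p ∈ opPart (T : Set (H × H)), p.1 ∈ negSet J →
        p.2 ∈ closure (domSet (T : Set (H × H))))) ∧
    ((∀ p ∈ opPart (T : Set (H × H)), p.1 ∈ negSet J →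
        p.2 ∈ closure (domSet (T : Set (H × H)))) ↔
      (∀ p ∈ opPart (T : Set (H × H)), p.1 ∈ negSet J →
        p.2 ∈ closure (setSum (domSet (T : Set (H × H))) (mulSet (T : Set (H × H)))))) ∧
    ((negSet J ⊆ {x : H | ∃ y ∈ closure (domSet (T : Set (H × H))), (x, y) ∈ T}) →
      (({x : H | ∃ y ∈ closure (domSet (T : Set (H × H))), (x, y) ∈ T}
          = domSet (T : Set (H × H))) ↔
        (∀ p ∈ opPart (T : Set (H × H)), p.1 ∈ posSet J →
          p.2 ∈ closure (setSum (domSet (T : Set (H × H))) (mulSet (T : Set (H × H))))))) := by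
  classical
  set D : Set H := domSet (T : Set (H × H)) with hDdef
  set L : Set H := {x : H | ∃ y ∈ closure D, (x, y) ∈ T} with hLdef
  -- the multivalued part as a submodule
  set M : Submodule ℂ H := Submodule.comap (LinearMap.inr ℂ H H) T with hMdef
  have hMmem : ∀ z : H, z ∈ M ↔ ((0 : H), z) ∈ T := fun z => Iff.rfl
  have hmulSet : mulSet (T : Set (H × H)) = (M : Set H) := rfl
  have hMclosed : IsClosed (M : Set H) := by
    have : (M : Set H) = (fun y : H => ((0 : H), y)) ⁻¹' (T : Set (H × H)) := rfl
    rw [this]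
    exact hTclosed.preimage (Continuous.prodMk_right 0)
  haveI : CompleteSpace M := hMclosed.completeSpace_coe
  -- Pm maps into negSet, Pp into posSet
  have hPmNeg : ∀ x : H, Pm J x ∈ negSet J := by
    intro x
    show J ((2⁻¹ : ℂ) • (x - J x)) = -((2⁻¹ : ℂ) • (x - J x))
    rw [map_smul, map_sub, hJ.invol, ← smul_neg, neg_sub]
  have hPpPos : ∀ x : H, Pp J x ∈ posSet J := by
    intro x
    show J ((2⁻¹ : ℂ) • (x + J x)) = (2⁻¹ : ℂ) • (x + J x)
    rw [map_smul, map_add, hJ.invol, add_comm]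
  have hSplit : ∀ x : H, Pm J x + Pp J x = x := by
    intro x
    show (2⁻¹ : ℂ) • (x - J x) + (2⁻¹ : ℂ) • (x + J x) = x
    rw [← smul_add, sub_add_add_cancel, ← two_smul ℂ x, smul_smul]
    norm_num
  -- key orthogonality: M ⟂ D
  have h1 : ∀ z ∈ M, ∀ x ∈ D, (inner ℂ z (J x) : ℂ) = 0 := by
    intro z hz x hx
    obtain ⟨y, hy⟩ := hx
    have h := hTsym ((hMmem z).1 hz) _ hy
    simpa [kip] using h
  have horth : ∀ z ∈ M, ∀ x ∈ D, (inner ℂ z x : ℂ) = 0 := by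
    intro z hz x hx
    have hxm : Pm J x ∈ D := hdom (hPmNeg x)
    have h2 := h1 z hz _ hxm
    rw [hPmNeg x] at h2
    have h3 : (inner ℂ z (Pm J x) : ℂ) = 0 := by simpa using h2
    have h4 := h1 z hz x hx
    rw [Pm, inner_smul_right, inner_sub_right, h4, sub_zero] at h3
    simpa using h3
  have hDorth : ∀ d ∈ D, d ∈ Mᗮ := by
    intro d hd
    exact (Submodule.mem_orthogonal M d).2 (fun z hz => horth z hz d hd)
  -- D is closed under subtraction / addition; closure D is closed under addition
  have hDsub : ∀ a ∈ D, ∀ b ∈ D, a - b ∈ D := by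
    rintro a ⟨ya, hya⟩ b ⟨yb, hyb⟩
    exact ⟨ya - yb, T.sub_mem hya hyb⟩
  have hDset : ((T.map (LinearMap.fst ℂ H H) : Submodule ℂ H) : Set H) = D := by
    ext x
    simp only [Submodule.mem_map, SetLike.mem_coe]
    constructor
    · rintro ⟨⟨x', y⟩, hp, rfl⟩; exact ⟨y, hp⟩
    · rintro ⟨y, hy⟩; exact ⟨(x, y), hy, rfl⟩
  have hclosDadd : ∀ a ∈ closure D, ∀ b ∈ closure D, a + b ∈ closure D := by
    intro a ha b hb
    rw [← hDset] at ha hb ⊢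
    rw [← Submodule.topologicalClosure_coe] at ha hb ⊢
    exact Submodule.add_mem _ ha hb
  have hDsum : D ⊆ setSum D (M : Set H) := by
    intro d hd
    exact ⟨d, hd, 0, Submodule.zero_mem M, (add_zero d).symm⟩
  -- decomposition into operator part
  have hopdec : ∀ x y : H, (x, y) ∈ T →
      ((x, y - (M.orthogonalProjectionOnto y : H)) ∈ opPart (T : Set (H × H)) ∧
        y - (M.orthogonalProjectionOnto y : H) ∈ Mᗮ) := by
    intro x y hxy
    have hperp : y - (M.orthogonalProjectionOnto y : H) ∈ Mᗮ :=
      Submodule.sub_starProjection_mem_orthogonal (K := M) y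
    have hmem : (x, y - (M.orthogonalProjectionOnto y : H)) ∈ T := by
      have h0 : ((0 : H), (M.orthogonalProjectionOnto y : H)) ∈ T :=
        (hMmem _).1 (M.orthogonalProjectionOnto y).2
      have := T.sub_mem hxy h0
      simpa using this
    refine ⟨⟨hmem, ?_⟩, hperp⟩
    intro z hz
    rw [hmulSet] at hz
    exact inner_eq_zero_symm.1 ((Submodule.mem_orthogonal M _).1 hperp z hz)
  -- orthogonality of opPart values
  have hopperp : ∀ p ∈ opPart (T : Set (H × H)), p.2 ∈ Mᗮ := by
    intro p hp
    refine (Submodule.mem_orthogonal M _).2 (fun z hz => ?_)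
    exact inner_eq_zero_symm.1 (hp.2 z (by rwa [hmulSet]))
  -- (b) → (a)
  have hba : (∀ p ∈ opPart (T : Set (H × H)), p.1 ∈ negSet J → p.2 ∈ closure D) →
      negSet J ⊆ L := by
    intro hb x hx
    obtain ⟨y, hy⟩ := hdom hx
    obtain ⟨hop, _⟩ := hopdec x y hy
    exact ⟨_, hb _ hop hx, hop.1⟩
  -- (a) → (b)
  have hab : negSet J ⊆ L →
      (∀ p ∈ opPart (T : Set (H × H)), p.1 ∈ negSet J → p.2 ∈ closure D) := by
    intro ha p hp hneg
    obtain ⟨x0, y0⟩ := p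
    obtain ⟨y', hy'c, hy'T⟩ := ha hneg
    have hdiff : y0 - y' ∈ M := by
      rw [hMmem]
      have := T.sub_mem hp.1 hy'T
      simpa using this
    have hcl : y0 ∈ closure (setSum D (M : Set H)) := by
      have := mem_closure_setSum' (Ms := (M : Set H)) hy'c hdiff
      rwa [add_sub_cancel] at this
    exact key_proj M D hDorth y0 hcl (hopperp _ hp)
  -- (c) → (b)
  have hcb : (∀ p ∈ opPart (T : Set (H × H)), p.1 ∈ negSet J →
        p.2 ∈ closure (setSum D (mulSet (T : Set (H × H))))) →
      (∀ p ∈ opPart (T : Set (H × H)), p.1 ∈ negSet J → p.2 ∈ closure D) := by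
    intro hc p hp hneg
    have := hc p hp hneg
    rw [hmulSet] at this
    exact key_proj M D hDorth p.2 this (hopperp p hp)
  have hbc : (∀ p ∈ opPart (T : Set (H × H)), p.1 ∈ negSet J → p.2 ∈ closure D) →
      (∀ p ∈ opPart (T : Set (H × H)), p.1 ∈ negSet J →
        p.2 ∈ closure (setSum D (mulSet (T : Set (H × H))))) := by
    intro hb p hp hneg
    rw [hmulSet]
    exact closure_mono hDsum (hb p hp hneg)
  refine ⟨⟨hab, hba⟩, ⟨hbc, hcb⟩, ?_⟩
  -- final part
  intro ha
  constructor
  · intro hLD p hp _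
    obtain ⟨x0, y0⟩ := p
    have hp1D : (x0, y0).1 ∈ D := ⟨y0, hp.1⟩
    have hp1L : x0 ∈ L := by rw [hLD]; exact hp1D
    obtain ⟨y', hy'c, hy'T⟩ := hp1L
    have hdiff : y0 - y' ∈ M := by
      rw [hMmem]
      have := T.sub_mem hp.1 hy'T
      simpa using this
    show y0 ∈ closure (setSum D (mulSet (T : Set (H × H))))
    rw [hmulSet]
    have := mem_closure_setSum' (Ms := (M : Set H)) hy'c hdiff
    rwa [add_sub_cancel] at this
  · intro hcnd
    apply Set.eq_of_subset_of_subset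
    · rintro x ⟨y, _, hyT⟩
      exact ⟨y, hyT⟩
    · intro x hx
      -- negative part
      obtain ⟨ym, hymc, hymT⟩ := ha (hPmNeg x)
      -- positive part
      have hxm : Pm J x ∈ D := hdom (hPmNeg x)
      have hxp : Pp J x ∈ D := by
        have : Pp J x = x - Pm J x := by rw [eq_sub_iff_add_eq, add_comm, hSplit]
        rw [this]
        exact hDsub x hx _ hxm
      obtain ⟨y, hyT⟩ := hxp
      obtain ⟨hop, hperp⟩ := hopdec _ y hyT
      have hys : y - (M.orthogonalProjectionOnto y : H) ∈ closure (setSum D (M : Set H)) := by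
        have := hcnd _ hop (hPpPos x)
        rwa [hmulSet] at this
      have hysD : y - (M.orthogonalProjectionOnto y : H) ∈ closure D :=
        key_proj M D hDorth _ hys hperp
      -- combine
      refine ⟨ym + (y - (M.orthogonalProjectionOnto y : H)), hclosDadd _ hymc _ hysD, ?_⟩
      have := T.add_mem hymT hop.1
      rw [show (Pm J x, ym) + (Pp J x, y - (M.orthogonalProjectionOnto y : H))
          = (Pm J x + Pp J x, ym + (y - (M.orthogonalProjectionOnto y : H))) from rfl,
        hSplit] at this
      exact this
end
end

section
/- Let T be a closed symmetric linear relation in a Krein space H with canonical decomposition H = H⁻[⊕]H⁺ and canonical symmetry J, such that H⁻ ⊆ D_T and D_T + R_T is dense in H (i.e. T is of class (LP)). Then the deficiency subspace Σ = T^c ∩ T^⊥ is an operator, every non-real eigenvalue of Σ lies in {i, −i}, and Ker_i Σ = H⁺ ∩ Ker_i(JT^c), Ker_{−i} Σ = H⁺ ∩ Ker_{−i}(JT^c). -/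
open Complex

noncomputable section

variable {H : Type*} [NormedAddCommGroup H] [InnerProductSpace ℂ H] [CompleteSpace H]

/-- Orthogonal complement of `T` in the Hilbert space `H × H`. -/
def perpRel (T : Set (H × H)) : Set (H × H) :=
  {q | ∀ p ∈ T, (inner ℂ q.1 p.1 : ℂ) + (inner ℂ q.2 p.2 : ℂ) = 0}

/-- The deficiency subspace `Σ = T^c ∩ T^⊥`. -/
def SigmaRel (J : H →L[ℂ] H) (T : Set (H × H)) : Set (H × H) :=
  adjRel J T ∩ perpRel T

/-- `[·,·]`-orthogonal complement of a lineal. -/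
def kipOrtho (J : H →L[ℂ] H) (L : Set H) : Set H := {u | ∀ x ∈ L, kip J u x = 0}

/-- A closed lineal `L` is regular: `L ∩ L^[⊥] = {0}` and `L + L^[⊥] = H`. -/
def IsRegularSub (J : H →L[ℂ] H) (L : Set H) : Prop :=
  L ∩ kipOrtho J L = {0} ∧ setSum L (kipOrtho J L) = Set.univ

section auxlemmas

variable {J : H →L[ℂ] H} {T : Submodule ℂ (H × H)}

lemma inner_J_swap (hJ : IsFundSym J) (x y : H) : (inner ℂ (J x) y : ℂ) = inner ℂ x (J y) :=
  hJ.symm x y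

lemma inner_JJ (hJ : IsFundSym J) (x y : H) : (inner ℂ (J x) (J y) : ℂ) = inner ℂ x y := by
  rw [hJ.symm, hJ.invol]

lemma dense_kill (hdense : Dense (setSum (domSet (T : Set (H × H))) (ranSet (T : Set (H × H)))))
    (y : H) (h1 : ∀ p ∈ domSet (T : Set (H × H)), (inner ℂ y p : ℂ) = 0)
    (h2 : ∀ q ∈ ranSet (T : Set (H × H)), (inner ℂ y q : ℂ) = 0) : y = 0 := by
  have hz : ∀ z : H, (inner ℂ y z : ℂ) = 0 := by
    intro z
    have hcl : IsClosed {z : H | (inner ℂ y z : ℂ) = 0} :=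
      isClosed_eq (Continuous.inner continuous_const continuous_id) continuous_const
    have hsub : setSum (domSet (T : Set (H × H))) (ranSet (T : Set (H × H)))
        ⊆ {z : H | (inner ℂ y z : ℂ) = 0} := by
      rintro z ⟨p, hp, q, hq, rfl⟩
      simp only [Set.mem_setOf_eq, inner_add_right, h1 p hp, h2 q hq, add_zero]
    exact hcl.closure_subset_iff.mpr hsub (hdense z)
  exact inner_self_eq_zero.mp (hz y)

lemma domJ (hJ : IsFundSym J) (hdom : negSet J ⊆ domSet (T : Set (H × H)))
    {p : H} (hp : p ∈ domSet (T : Set (H × H))) : J p ∈ domSet (T : Set (H × H)) := by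
  obtain ⟨q, hq⟩ := hp
  have hm : Pm J p ∈ negSet J := by
    show J ((2⁻¹ : ℂ) • (p - J p)) = -((2⁻¹ : ℂ) • (p - J p))
    rw [map_smul, map_sub, hJ.invol, ← smul_neg, neg_sub]
  obtain ⟨r, hr⟩ := hdom hm
  refine ⟨q - (2 : ℂ) • r, ?_⟩
  have hmem : ((p, q) : H × H) - (2 : ℂ) • ((Pm J p, r) : H × H) ∈ T :=
    T.sub_mem hq (T.smul_mem _ hr)
  have heq : ((p, q) : H × H) - (2 : ℂ) • ((Pm J p, r) : H × H) = (J p, q - (2 : ℂ) • r) := by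
    have h1 : p - (2 : ℂ) • Pm J p = J p := by
      rw [Pm, smul_smul]
      norm_num
    exact Prod.ext h1 rfl
  rwa [heq] at hmem

lemma symm_real (hJ : IsFundSym J) (hTsym : IsSymRel J (T : Set (H × H))) {v s : H}
    (hvs : (v, s) ∈ (T : Set (H × H))) :
    (starRingEnd ℂ) (inner ℂ v (J s) : ℂ) = inner ℂ v (J s) := by
  have h2 : (inner ℂ s (J v) : ℂ) = inner ℂ v (J s) := hTsym hvs (v, s) hvs
  calc (starRingEnd ℂ) (inner ℂ v (J s) : ℂ) = inner ℂ (J s) v := inner_conj_symm _ _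
    _ = inner ℂ s (J v) := hJ.symm s v
    _ = inner ℂ v (J s) := h2

lemma neg_eigen_zero (hJ : IsFundSym J) (hTsym : IsSymRel J (T : Set (H × H)))
    (hdom : negSet J ⊆ domSet (T : Set (H × H))) {e : ℂ} (he : e.im ≠ 0) {v : H}
    (hv : J v = -v)
    (hC : ∀ p q : H, (p, q) ∈ (T : Set (H × H)) → (inner ℂ v (J q) : ℂ) = e * inner ℂ v p) :
    v = 0 := by
  obtain ⟨s, hs⟩ := hdom (show v ∈ negSet J from hv)
  have h1 : (inner ℂ v (J s) : ℂ) = e * inner ℂ v v := hC v s hs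
  have h3 := symm_real hJ hTsym hs
  rw [h1, map_mul, inner_conj_symm] at h3
  have h4 : ((starRingEnd ℂ) e - e) * (inner ℂ v v : ℂ) = 0 := by linear_combination h3
  rcases mul_eq_zero.mp h4 with h | h
  · exact absurd (Complex.conj_eq_iff_im.mp (by linear_combination h)) he
  · exact inner_self_eq_zero.mp h

end auxlemmas
section auxlemmas2
variable {J : H →L[ℂ] H} {T : Submodule ℂ (H × H)}

/-- From `(x, l•x) ∈ Σ`, the components `a = ½x - ½ilJx ∈ N_i`, `b = ½x + ½ilJx ∈ N_{-i}`. -/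
lemma eigen_N (hJ : IsFundSym J) {x : H} {l : ℂ}
    (hS : (x, l • x) ∈ SigmaRel J (T : Set (H × H))) :
    (∀ p q : H, (p, q) ∈ (T : Set (H × H)) →
      (inner ℂ ((2⁻¹ : ℂ) • x - (2⁻¹ * Complex.I * l) • (J x)) (J q) : ℂ)
        = -Complex.I * inner ℂ ((2⁻¹ : ℂ) • x - (2⁻¹ * Complex.I * l) • (J x)) p) ∧
    (∀ p q : H, (p, q) ∈ (T : Set (H × H)) →
      (inner ℂ ((2⁻¹ : ℂ) • x + (2⁻¹ * Complex.I * l) • (J x)) (J q) : ℂ)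
        = Complex.I * inner ℂ ((2⁻¹ : ℂ) • x + (2⁻¹ * Complex.I * l) • (J x)) p) := by
  obtain ⟨hA, hP⟩ := hS
  have e1 : ∀ p q : H, (p, q) ∈ (T : Set (H × H)) →
      (starRingEnd ℂ) l * (inner ℂ x (J p) : ℂ) = inner ℂ x (J q) := by
    intro p q h
    have := hA (p, q) h
    simp [kip, inner_smul_left] at this
    rw [mul_comm]; exact this
  have e2 : ∀ p q : H, (p, q) ∈ (T : Set (H × H)) →
      (inner ℂ x p : ℂ) + (starRingEnd ℂ) l * inner ℂ x q = 0 := by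
    intro p q h
    have := hP (p, q) h
    simp [inner_smul_left] at this
    rw [mul_comm]; exact this
  have hconj : (starRingEnd ℂ) (2⁻¹ * Complex.I * l) = 2⁻¹ * (-Complex.I) * (starRingEnd ℂ) l := by
    simp [map_mul, map_inv₀, map_ofNat, Complex.conj_I]
  constructor
  · intro p q h
    rw [inner_sub_left, inner_sub_left, inner_smul_left, inner_smul_left, inner_smul_left,
      inner_smul_left, inner_JJ hJ, inner_J_swap hJ, hconj]
    simp only [map_inv₀, map_ofNat]
    linear_combination (-(2⁻¹ : ℂ)) * e1 p q h + (2⁻¹ * Complex.I) * e2 p q h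
      + (2⁻¹ * (starRingEnd ℂ) l * (inner ℂ x (J p) : ℂ)) * Complex.I_sq
  · intro p q h
    rw [inner_add_left, inner_add_left, inner_smul_left, inner_smul_left, inner_smul_left,
      inner_smul_left, inner_JJ hJ, inner_J_swap hJ, hconj]
    simp only [map_inv₀, map_ofNat]
    linear_combination (-(2⁻¹ : ℂ)) * e1 p q h + (-(2⁻¹) * Complex.I) * e2 p q h
      + (2⁻¹ * (starRingEnd ℂ) l * (inner ℂ x (J p) : ℂ)) * Complex.I_sq
end auxlemmas2
section auxlemmas3
variable {J : H →L[ℂ] H} {T : Submodule ℂ (H × H)}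

lemma kerl_eq (hJ : IsFundSym J) (hTsym : IsSymRel J (T : Set (H × H)))
    (hdom : negSet J ⊆ domSet (T : Set (H × H))) {e : ℂ} (he2 : e * e = -1)
    (hce : (starRingEnd ℂ) e = -e) (heim : e.im ≠ 0) :
    kerl (SigmaRel J (T : Set (H × H))) e
      = posSet J ∩ kerl (JRel J (adjRel J (T : Set (H × H)))) e := by
  ext x
  constructor
  · intro hx
    have hS : (x, e • x) ∈ SigmaRel J (T : Set (H × H)) := hx
    obtain ⟨hA, hP⟩ := hS
    have e1 : ∀ p q : H, (p, q) ∈ (T : Set (H × H)) →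
        -e * (inner ℂ x (J p) : ℂ) = inner ℂ x (J q) := by
      intro p q h
      have := hA (p, q) h
      simp only [kip, inner_smul_left, hce] at this
      exact this
    have e2 : ∀ p q : H, (p, q) ∈ (T : Set (H × H)) →
        (inner ℂ x p : ℂ) + -e * inner ℂ x q = 0 := by
      intro p q h
      have := hP (p, q) h
      simp only [inner_smul_left, hce] at this
      exact this
    set m : H := (2⁻¹ : ℂ) • x - (2⁻¹ : ℂ) • (J x) with hm_def
    have hJm : J m = -m := by
      rw [hm_def, map_sub, map_smul, map_smul, hJ.invol]
      module
    have hC : ∀ p q : H, (p, q) ∈ (T : Set (H × H)) →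
        (inner ℂ m (J q) : ℂ) = e * inner ℂ m p := by
      intro p q h
      rw [hm_def, inner_sub_left, inner_sub_left, inner_smul_left, inner_smul_left,
        inner_smul_left, inner_smul_left, inner_JJ hJ, inner_J_swap hJ]
      simp only [map_inv₀, map_ofNat]
      linear_combination (-(2⁻¹ : ℂ)) * e1 p q h + (-(2⁻¹ : ℂ) * e) * e2 p q h
        + (-(2⁻¹ : ℂ) * (inner ℂ x q : ℂ)) * he2
    have hm0 : m = 0 := neg_eigen_zero hJ hTsym hdom heim hJm hC
    have hxp : J x = x := by
      have h1 : (2⁻¹ : ℂ) • (x - J x) = 0 := by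
        rw [smul_sub]; exact hm0
      have h2 : x - J x = 0 := by
        rcases smul_eq_zero.mp h1 with h | h
        · norm_num at h
        · exact h
      have := sub_eq_zero.mp h2
      exact this.symm
    refine ⟨hxp, ⟨(x, e • x), hA, ?_⟩⟩
    have : J (e • x) = e • x := by rw [map_smul, hxp]
    exact Prod.ext rfl this.symm
  · rintro ⟨hxp, ⟨q, hq, heq⟩⟩
    have hq1 : q.1 = x := (congrArg Prod.fst heq).symm
    have hq2 : J q.2 = e • x := (congrArg Prod.snd heq).symm
    have hq2' : q.2 = e • x := by
      have := congrArg J hq2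
      rw [hJ.invol, map_smul, hxp] at this
      exact this
    have hadj : (x, e • x) ∈ adjRel J (T : Set (H × H)) := by
      have : q = (x, e • x) := Prod.ext hq1 hq2'
      rwa [this] at hq
    refine ⟨hadj, ?_⟩
    intro pp hpp
    have ha := hadj pp hpp
    simp only [kip, inner_smul_left, hce] at ha
    have hswap : ∀ z : H, (inner ℂ x (J z) : ℂ) = inner ℂ x z := by
      intro z
      rw [← inner_J_swap hJ, hxp]
    rw [hswap, hswap] at ha
    show (inner ℂ x pp.1 : ℂ) + inner ℂ (e • x) pp.2 = 0
    rw [inner_smul_left, hce]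
    linear_combination e * ha + (inner ℂ x pp.1 : ℂ) * he2
end auxlemmas3
section auxlemmas4
variable {J : H →L[ℂ] H} {T : Submodule ℂ (H × H)}

lemma part2_lemma (hJ : IsFundSym J) (hTsym : IsSymRel J (T : Set (H × H)))
    (hdom : negSet J ⊆ domSet (T : Set (H × H)))
    (hdense : Dense (setSum (domSet (T : Set (H × H))) (ranSet (T : Set (H × H)))))
    (l : ℂ) (him : l.im ≠ 0)
    (hex : ∃ x : H, x ≠ 0 ∧ (x, l • x) ∈ SigmaRel J (T : Set (H × H))) :
    l = Complex.I ∨ l = -Complex.I := by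
  obtain ⟨x, hx, hS⟩ := hex
  by_contra hcon
  push_neg at hcon
  obtain ⟨hl1, hl2⟩ := hcon
  have hl0 : l ≠ 0 := by intro h; rw [h] at him; simp at him
  obtain ⟨Na, Nb⟩ := eigen_N hJ hS
  set a : H := (2⁻¹ : ℂ) • x - (2⁻¹ * Complex.I * l) • (J x) with ha_def
  set b : H := (2⁻¹ : ℂ) • x + (2⁻¹ * Complex.I * l) • (J x) with hb_def
  set c : ℂ := (Complex.I / l - Complex.I * l) / 2 with hc_def
  set d : ℂ := (Complex.I / l + Complex.I * l) / 2 with hd_def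
  clear_value a b c d
  have hd0 : d ≠ 0 := by
    intro h
    rw [hd_def] at h
    have h2 : Complex.I / l + Complex.I * l = 0 := by
      rcases div_eq_zero_iff.mp h with h' | h'
      · exact h'
      · norm_num at h'
    have h4 : Complex.I * (1 + l * l) = 0 := by
      field_simp at h2
      linear_combination h2
    have h5 : (1 : ℂ) + l * l = 0 := by
      rcases mul_eq_zero.mp h4 with h' | h'
      · exact absurd h' Complex.I_ne_zero
      · exact h'
    have h3 : (l - Complex.I) * (l + Complex.I) = 0 := by
      linear_combination h5 - Complex.I_sq
    rcases mul_eq_zero.mp h3 with h' | h'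
    · exact hl1 (sub_eq_zero.mp h')
    · exact hl2 (eq_neg_of_add_eq_zero_left h')
  have hcd : c * c - d * d = 1 := by
    have h1 : c * c - d * d = (Complex.I / l) * (-(Complex.I * l)) := by
      rw [hc_def, hd_def]; ring
    rw [h1]
    field_simp
    linear_combination -Complex.I_sq
  have hab : a + b = x := by rw [ha_def, hb_def]; module
  have hJa : J a = c • a - d • b := by
    rw [ha_def, hb_def, hc_def, hd_def, map_sub, map_smul, map_smul, hJ.invol]
    match_scalars
    · field_simp
      linear_combination 2 * Complex.I_sq
    · field_simp
      ring
  have hJb : J b = d • a - c • b := by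
    rw [ha_def, hb_def, hc_def, hd_def, map_add, map_smul, map_smul, hJ.invol]
    match_scalars
    · field_simp
      linear_combination 2 * Complex.I_sq
    · field_simp
      ring
  set v : H := -d • a + (c + 1) • b with hv_def
  set w : H := -d • a + (c - 1) • b with hw_def
  clear_value v w
  have hJv : J v = -v := by
    rw [hv_def, map_add, map_smul, map_smul, hJa, hJb]
    match_scalars
    · ring
    · linear_combination -hcd
  have hJw : J w = w := by
    rw [hw_def, map_add, map_smul, map_smul, hJa, hJb]
    match_scalars
    · ring
    · linear_combination -hcd
  by_cases hv0 : v = 0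
  · -- degenerate case: d•a = (c+1)•b, kill b by density
    have h := hv0
    rw [hv_def] at h
    have h1 : (c + 1) • b = -((-d) • a) := eq_neg_of_add_eq_zero_right h
    have hdab : d • a = (c + 1) • b := by rw [h1]; module
    have hc1 : c + 1 ≠ 0 := by
      intro hcc
      apply hd0
      have : d * d = 0 := by linear_combination (c - 1) * hcc - hcd
      exact mul_self_eq_zero.mp this
    have hab' : a = (d⁻¹ * (c + 1)) • b := by
      have := congrArg (fun z => d⁻¹ • z) hdab
      simpa [smul_smul, inv_mul_cancel₀ hd0] using this
    have hNb2 : ∀ p q : H, (p, q) ∈ (T : Set (H × H)) →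
        (inner ℂ b (J q) : ℂ) = -Complex.I * inner ℂ b p := by
      intro p q hpq
      have hna := Na p q hpq
      rw [hab', inner_smul_left, inner_smul_left] at hna
      have hcoef : (starRingEnd ℂ) (d⁻¹ * (c + 1)) ≠ 0 :=
        (map_ne_zero _).mpr (mul_ne_zero (inv_ne_zero hd0) hc1)
      have h2 : (starRingEnd ℂ) (d⁻¹ * (c + 1)) * inner ℂ b (J q)
          = (starRingEnd ℂ) (d⁻¹ * (c + 1)) * (-Complex.I * inner ℂ b p) := by
        linear_combination hna
      exact mul_left_cancel₀ hcoef h2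
    have hbp0 : ∀ p q : H, (p, q) ∈ (T : Set (H × H)) →
        (inner ℂ b p : ℂ) = 0 ∧ (inner ℂ b (J q) : ℂ) = 0 := by
      intro p q hpq
      have h1' := Nb p q hpq
      have h2' := hNb2 p q hpq
      have h2I : (2 * Complex.I : ℂ) ≠ 0 := by
        simp [Complex.I_ne_zero]
      have h3' : (2 * Complex.I) * (inner ℂ b p : ℂ) = 0 := by
        linear_combination h2' - h1'
      have hp0 : (inner ℂ b p : ℂ) = 0 := (mul_eq_zero.mp h3').resolve_left h2I
      exact ⟨hp0, by rw [h2', hp0, mul_zero]⟩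
    have hJb' : J b = b := by
      rw [hJb, hdab]; module
    have hb0 : b = 0 := by
      apply dense_kill hdense
      · rintro p ⟨q, hpq⟩
        exact (hbp0 p q hpq).1
      · rintro q ⟨p, hpq⟩
        calc (inner ℂ b q : ℂ) = inner ℂ (J b) q := by rw [hJb']
          _ = inner ℂ b (J q) := hJ.symm b q
          _ = 0 := (hbp0 p q hpq).2
    have ha0 : a = 0 := by
      have hda : d • a = 0 := by rw [hdab, hb0, smul_zero]
      rcases smul_eq_zero.mp hda with h' | h'
      · exact absurd h' hd0
      · exact h'
    exact hx (by rw [← hab, ha0, hb0, add_zero])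
  · -- main case: v ≠ 0, v ∈ H⁻ ⊆ dom T
    obtain ⟨s, hvs⟩ := hdom (show v ∈ negSet J from hJv)
    have hwv : (inner ℂ w v : ℂ) = 0 := by
      have h1 : (inner ℂ w v : ℂ) = -inner ℂ w v := by
        calc (inner ℂ w v : ℂ) = inner ℂ (J w) v := by rw [hJw]
          _ = inner ℂ w (J v) := hJ.symm w v
          _ = inner ℂ w (-v) := by rw [hJv]
          _ = -inner ℂ w v := inner_neg_right _ _
      linear_combination h1 / 2
    have hvw_b : v - w = (2 : ℂ) • b := by rw [hv_def, hw_def]; module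
    have hvw_a : (2 * d) • a = (c - 1) • v - (c + 1) • w := by
      rw [hv_def, hw_def]; module
    have hbv : (2 : ℂ) * inner ℂ b v = inner ℂ v v := by
      have h1 := congrArg (fun z => (inner ℂ z v : ℂ)) hvw_b
      simp only [inner_sub_left, inner_smul_left, map_ofNat] at h1
      rw [hwv] at h1
      linear_combination -h1
    have hav : (2 * (starRingEnd ℂ) d) * inner ℂ a v = ((starRingEnd ℂ) c - 1) * inner ℂ v v := by
      have h1 := congrArg (fun z => (inner ℂ z v : ℂ)) hvw_a
      simp only [inner_sub_left, inner_smul_left, map_mul, map_ofNat] at h1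
      rw [hwv] at h1
      simp only [map_sub, map_one] at h1
      linear_combination h1
    have haJs := Na v s hvs
    have hbJs := Nb v s hvs
    have hvJs : (inner ℂ v (J s) : ℂ)
        = -(starRingEnd ℂ) d * inner ℂ a (J s) + ((starRingEnd ℂ) c + 1) * inner ℂ b (J s) := by
      rw [hv_def, inner_add_left, inner_smul_left, inner_smul_left]
      simp only [map_add, map_neg, map_one]
    have hdc : (starRingEnd ℂ) d ≠ 0 := (map_ne_zero _).mpr hd0
    have key : (2 * (starRingEnd ℂ) d) * inner ℂ v (J s)
        = (2 * (starRingEnd ℂ) d) * ((Complex.I * (starRingEnd ℂ) c) * inner ℂ v v) := by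
      rw [hvJs, haJs, hbJs]
      linear_combination ((starRingEnd ℂ) d * Complex.I) * hav
        + (((starRingEnd ℂ) c + 1) * (starRingEnd ℂ) d * Complex.I) * hbv
    have h5 : (inner ℂ v (J s) : ℂ) = (Complex.I * (starRingEnd ℂ) c) * inner ℂ v v :=
      mul_left_cancel₀ (mul_ne_zero two_ne_zero hdc) key
    have hreal := symm_real hJ hTsym hvs
    rw [h5] at hreal
    simp only [map_mul, Complex.conj_I, Complex.conj_conj, inner_conj_symm] at hreal
    have hvv0 : (inner ℂ v v : ℂ) ≠ 0 := inner_self_ne_zero.mpr hv0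
    have hcc : (starRingEnd ℂ) c + c = 0 := by
      have h6 : (Complex.I * ((starRingEnd ℂ) c + c)) * (inner ℂ v v : ℂ) = 0 := by
        linear_combination -hreal
      rcases mul_eq_zero.mp h6 with h' | h'
      · rcases mul_eq_zero.mp h' with h'' | h''
        · exact absurd h'' Complex.I_ne_zero
        · exact h''
      · exact absurd h' hvv0
    have hll : ((starRingEnd ℂ) l) ≠ 0 := (map_ne_zero _).mpr hl0
    have hconjc : (starRingEnd ℂ) c
        = (-Complex.I / ((starRingEnd ℂ) l) + Complex.I * (starRingEnd ℂ) l) / 2 := by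
      rw [hc_def]
      simp [map_div₀, map_sub, map_add, map_mul, map_ofNat, Complex.conj_I]
    rw [hconjc, hc_def] at hcc
    have hfac : ((starRingEnd ℂ) l - l) * (1 + l * (starRingEnd ℂ) l) = 0 := by
      field_simp at hcc
      linear_combination (-Complex.I) * hcc
        + ((-1 + ((starRingEnd ℂ) l) ^ 2) * l + (starRingEnd ℂ) l * (1 - l ^ 2)) * Complex.I_sq
    have h1p : (1 : ℂ) + l * (starRingEnd ℂ) l ≠ 0 := by
      intro h
      rw [Complex.mul_conj] at h
      have h2 := congrArg Complex.re h
      simp only [Complex.add_re, Complex.one_re, Complex.ofReal_re, Complex.zero_re] at h2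
      nlinarith [Complex.normSq_nonneg l]
    have hlr : (starRingEnd ℂ) l = l := by
      rcases mul_eq_zero.mp hfac with h' | h'
      · exact sub_eq_zero.mp h'
      · exact absurd h' h1p
    exact him (Complex.conj_eq_iff_im.mp hlr)
end auxlemmas4
/-- Proposition 5.2: for `T` of class (LP), the deficiency subspace `Σ` is an
operator whose non-real eigenvalues lie in `{i, −i}`, with
`Ker_{±i} Σ = H⁺ ∩ Ker_{±i} JT^c`. -/
theorem statement17 (J : H →L[ℂ] H) (hJ : IsFundSym J)
    (T : Submodule ℂ (H × H))
    (hTclosed : IsClosed (T : Set (H × H)))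
    (hTsym : IsSymRel J (T : Set (H × H)))
    (hdom : negSet J ⊆ domSet (T : Set (H × H)))
    (hdense : Dense (setSum (domSet (T : Set (H × H))) (ranSet (T : Set (H × H))))) :
    (∀ y : H, ((0 : H), y) ∈ SigmaRel J (T : Set (H × H)) → y = 0) ∧
    (∀ l : ℂ, l.im ≠ 0 →
      (∃ x : H, x ≠ 0 ∧ (x, l • x) ∈ SigmaRel J (T : Set (H × H))) →
      l = Complex.I ∨ l = -Complex.I) ∧
    kerl (SigmaRel J (T : Set (H × H))) Complex.I
      = posSet J ∩ kerl (JRel J (adjRel J (T : Set (H × H)))) Complex.I ∧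
    kerl (SigmaRel J (T : Set (H × H))) (-Complex.I)
      = posSet J ∩ kerl (JRel J (adjRel J (T : Set (H × H)))) (-Complex.I) := by
  refine ⟨?_, ?_, ?_, ?_⟩
  · -- `Σ` is an operator
    intro y hy
    obtain ⟨hA, hP⟩ := hy
    apply dense_kill hdense
    · intro p hp
      obtain ⟨q, hq⟩ := domJ hJ hdom hp
      have h := hA (J p, q) hq
      simp only [kip] at h
      rw [hJ.invol] at h
      simpa using h
    · rintro q ⟨p, hpq⟩
      have h := hP (p, q) hpq
      simpa using h
  · -- non-real eigenvalues of `Σ` are `±i`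
    intro l him hex
    exact part2_lemma hJ hTsym hdom hdense l him hex
  · -- `Ker_i Σ = H⁺ ∩ Ker_i JT^c`
    exact kerl_eq hJ hTsym hdom Complex.I_mul_I Complex.conj_I (by simp)
  · -- `Ker_{-i} Σ = H⁺ ∩ Ker_{-i} JT^c`
    refine kerl_eq hJ hTsym hdom ?_ ?_ ?_
    · rw [neg_mul_neg]; exact Complex.I_mul_I
    · simp [Complex.conj_I]
    · simp
end
end

section
/- Let T be a closed linear relation in a Krein space H with canonical decomposition H = H⁻[⊕]H⁺ and canonical symmetry J, and fix λ ∈ ℂ∖{0} such that H⁻ + R_{JT^c − λ̄I} is a closed subspace. Then R_{T−λI} is closed if and only if H⁻ ∩ R_{T^c − λ̄I} is closed; if in addition H⁺ + R_{JT + λI} is closed, then R_{T−λI} is closed if and only if H⁺ ∩ R_{T−λI} is closed. -/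
open Complex

noncomputable section

variable {H : Type*} [NormedAddCommGroup H] [InnerProductSpace ℂ H] [CompleteSpace H]

section AuxGeneral
set_option linter.unusedSectionVars false
open scoped ComplexInnerProductSpace

variable {E : Type*} [NormedAddCommGroup E] [InnerProductSpace ℂ E] [CompleteSpace E]
variable {F : Type*} [NormedAddCommGroup F] [InnerProductSpace ℂ F] [CompleteSpace F]

theorem lemA (X : Submodule ℂ E) (hX : IsClosed (X : Set E)) (Q : E →L[ℂ] E)
    (hQ1 : ∀ x, x - Q x ∈ X) (hQ2 : ∀ x, ∀ z ∈ X, ⟪Q x, z⟫ = 0)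
    (N : Submodule ℂ E) :
    IsClosed ((X ⊔ N : Submodule ℂ E) : Set E) ↔ IsClosed (⇑Q '' (N : Set E)) := by
  have hQQ : ∀ x, Q (Q x) = Q x := by
    intro x
    have hd : Q x - Q (Q x) ∈ X := hQ1 (Q x)
    have h0 : ⟪Q x - Q (Q x), Q x - Q (Q x)⟫ = 0 := by
      rw [inner_sub_left, hQ2 x _ hd, hQ2 (Q x) _ hd, sub_zero]
    have := sub_eq_zero.mp (inner_self_eq_zero.mp h0)
    exact this.symm
  constructor
  · -- sup closed → image closed
    intro h
    have hset : ⇑Q '' (N : Set E)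
        = ((X ⊔ N : Submodule ℂ E) : Set E) ∩ {z | ∀ w ∈ X, ⟪z, w⟫ = 0} := by
      ext z; constructor
      · rintro ⟨n, hn, rfl⟩
        refine ⟨?_, ?_⟩
        · have : (Q n : E) = n - (n - Q n) := by abel
          rw [this]
          exact Submodule.sub_mem _ (Submodule.mem_sup_right hn) (Submodule.mem_sup_left (hQ1 n))
        · intro w hw; exact hQ2 n w hw
      · rintro ⟨hz, hperp⟩
        rcases Submodule.mem_sup.mp hz with ⟨x, hx, n, hn, rfl⟩
        have hQx : Q x = 0 := by
          have h1 : Q x ∈ X := by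
            have hxx : Q x = x - (x - Q x) := by abel
            rw [hxx]; exact X.sub_mem hx (hQ1 x)
          exact inner_self_eq_zero.mp (hQ2 x (Q x) h1)
        have hQz : Q (x + n) = Q n := by rw [map_add, hQx, zero_add]
        have hzz : x + n = Q n := by
          have hd : (x + n) - Q (x + n) ∈ X := hQ1 _
          have h0 : ⟪(x + n) - Q (x + n), (x + n) - Q (x + n)⟫ = 0 := by
            rw [inner_sub_left, hperp _ hd, hQ2 (x + n) _ hd, sub_zero]
          have := sub_eq_zero.mp (inner_self_eq_zero.mp h0)
          rw [← hQz]; exact this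
        exact ⟨n, hn, hzz.symm⟩
    rw [hset]
    apply h.inter
    have : {z | ∀ w ∈ X, ⟪z, w⟫ = 0} = ⋂ w ∈ (X : Set E), {z : E | ⟪z, w⟫ = 0} := by
      ext z; simp
    rw [this]
    refine isClosed_biInter fun w _ => ?_
    exact isClosed_eq (Continuous.inner continuous_id continuous_const) continuous_const
  · -- image closed → sup closed
    intro h
    have hsup : (X ⊔ N : Submodule ℂ E) = X ⊔ N.map (Q : E →ₗ[ℂ] E) := by
      apply le_antisymm
      · refine sup_le le_sup_left ?_
        intro n hn
        have : (n : E) = (n - Q n) + Q n := by abel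
        rw [this]
        exact Submodule.add_mem _ (Submodule.mem_sup_left (hQ1 n))
          (Submodule.mem_sup_right ⟨n, hn, rfl⟩)
      · refine sup_le le_sup_left ?_
        rintro _ ⟨n, hn, rfl⟩
        have : Q n = n - (n - Q n) := by abel
        rw [ContinuousLinearMap.coe_coe, this]
        exact Submodule.sub_mem _ (Submodule.mem_sup_right hn) (Submodule.mem_sup_left (hQ1 n))
    rw [hsup]
    have himg : ((N.map (Q : E →ₗ[ℂ] E) : Submodule ℂ E) : Set E) = ⇑Q '' (N : Set E) := by
      ext z; simp [Submodule.mem_map]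
    apply isClosed_of_closure_subset
    intro w hw
    rcases mem_closure_iff_seq_limit.mp hw with ⟨u, hu, hlim⟩
    have hQu : ∀ n, Q (u n) ∈ ⇑Q '' (N : Set E) := by
      intro n
      rcases Submodule.mem_sup.mp (hu n) with ⟨x, hx, m, hm, hxm⟩
      rcases hm with ⟨m', hm', rfl⟩
      have hQx : Q x = 0 := by
        have h1 : Q x ∈ X := by
          have hxx : Q x = x - (x - Q x) := by abel
          rw [hxx]; exact X.sub_mem hx (hQ1 x)
        exact inner_self_eq_zero.mp (hQ2 x (Q x) h1)
      refine ⟨m', hm', ?_⟩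
      rw [← hxm, map_add, hQx, zero_add, ContinuousLinearMap.coe_coe, hQQ]
    have hQw : Q w ∈ ⇑Q '' (N : Set E) := by
      apply h.mem_of_tendsto ((Q.continuous.tendsto w).comp hlim)
      exact Filter.Eventually.of_forall hQu
    have hXw : w - Q w ∈ X := by
      have : ∀ n, u n - Q (u n) ∈ X := fun n => hQ1 (u n)
      have hlim2 : Filter.Tendsto (fun n => u n - Q (u n)) Filter.atTop (nhds (w - Q w)) :=
        hlim.sub ((Q.continuous.tendsto w).comp hlim)
      exact hX.mem_of_tendsto hlim2 (Filter.Eventually.of_forall this)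
    have : w = (w - Q w) + Q w := by abel
    rw [this]
    rcases hQw with ⟨m, hm, hQwm⟩
    exact Submodule.add_mem _ (Submodule.mem_sup_left hXw)
      (Submodule.mem_sup_right (by rw [← hQwm] at *; exact ⟨m, hm, rfl⟩))


theorem lemB (M : Submodule ℂ E) (hM : IsClosed (M : Set E)) (Q : E →L[ℂ] E)
    (hQ1 : ∀ x, x - Q x ∈ M) (hQ2 : ∀ x, ∀ z ∈ M, ⟪Q x, z⟫ = 0)
    (A : F →L[ℂ] E)
    (hsup : IsClosed ((M ⊔ LinearMap.range (A : F →ₗ[ℂ] E) : Submodule ℂ E) : Set E))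
    (hint : IsClosed ((M : Set E) ∩ Set.range ⇑A)) :
    IsClosed (Set.range ⇑A) := by
  have hrg : ((LinearMap.range (A : F →ₗ[ℂ] E) : Submodule ℂ E) : Set E) = Set.range ⇑A := by
    ext y; simp [LinearMap.mem_range]
  have hQim : IsClosed (⇑Q '' Set.range ⇑A) := by
    have := (lemA M hM Q hQ1 hQ2 (LinearMap.range (A : F →ₗ[ℂ] E))).mp hsup
    rwa [hrg] at this
  -- B = Q ∘ A with closed range
  set B : F →L[ℂ] E := Q ∘L A with hB
  have hrB : Set.range ⇑B = ⇑Q '' Set.range ⇑A := by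
    ext y; constructor
    · rintro ⟨x, rfl⟩; exact ⟨A x, ⟨x, rfl⟩, rfl⟩
    · rintro ⟨_, ⟨x, rfl⟩, rfl⟩; exact ⟨x, rfl⟩
  have hBclosed : IsClosed (Set.range ⇑B) := by rw [hrB]; exact hQim
  have hkerQ : ∀ z, Q z = 0 → z ∈ M := by
    intro z hz
    have := hQ1 z; rwa [hz, sub_zero] at this
  -- open mapping: selection with norm bound
  have hrBsub : ((LinearMap.range (B : F →ₗ[ℂ] E) : Submodule ℂ E) : Set E) = Set.range ⇑B := by
    ext y; simp [LinearMap.mem_range]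
  haveI : CompleteSpace (LinearMap.range (B : F →ₗ[ℂ] E)) := by
    refine IsClosed.completeSpace_coe (hs := ?_)
    rw [hrBsub]; exact hBclosed
  set B' : F →L[ℂ] (LinearMap.range (B : F →ₗ[ℂ] E)) :=
    B.codRestrict (LinearMap.range (B : F →ₗ[ℂ] E)) (fun x => LinearMap.mem_range_self _ x) with hB'
  have hsurj : Function.Surjective ⇑B' := by
    rintro ⟨y, hy⟩
    rcases hy with ⟨x, hx⟩
    exact ⟨x, Subtype.ext hx⟩
  obtain ⟨C, hCpos, hC⟩ := B'.exists_preimage_norm_le hsurj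
  -- main closure argument
  apply isClosed_of_closure_subset
  intro y hy
  rcases mem_closure_iff_seq_limit.mp hy with ⟨u, hu, hlim⟩
  choose x hx using hu
  -- Q y ∈ range B
  have hQy : Q y ∈ Set.range ⇑B := by
    apply hBclosed.mem_of_tendsto ((Q.continuous.tendsto y).comp hlim)
    refine Filter.Eventually.of_forall fun n => ⟨x n, ?_⟩
    show B (x n) = (⇑Q ∘ u) n
    simp only [hB, ContinuousLinearMap.comp_apply, hx, Function.comp_apply]
  rcases hQy with ⟨z, hz⟩
  set w : E := y - A z with hw
  have hwM : w ∈ M := by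
    apply hkerQ
    rw [hw, map_sub, ← hz]
    simp [hB]
  -- sequence tending to w
  have hlimw : Filter.Tendsto (fun n => A (x n - z)) Filter.atTop (nhds w) := by
    have : (fun n => A (x n - z)) = fun n => u n - A z := by
      funext n; rw [map_sub, hx]
    rw [this]
    exact hlim.sub tendsto_const_nhds
  -- corrections p n
  have hsel : ∀ n, ∃ p : F, B p = B (x n - z) ∧ ‖p‖ ≤ C * ‖B (x n - z)‖ := by
    intro n
    obtain ⟨p, hp1, hp2⟩ := hC (B' (x n - z))
    refine ⟨p, ?_, ?_⟩
    · have := congrArg (Subtype.val) hp1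
      simpa [hB'] using this
    · exact hp2
  choose p hp1 hp2 using hsel
  have hBtend : Filter.Tendsto (fun n => B (x n - z)) Filter.atTop (nhds 0) := by
    have h1 : Filter.Tendsto (fun n => Q (A (x n - z))) Filter.atTop (nhds (Q w)) :=
      (Q.continuous.tendsto w).comp hlimw
    have hQw0 : Q w = 0 := by rw [hw, map_sub, ← hz]; simp [hB]
    rw [hQw0] at h1
    simpa [hB] using h1
  have hptend : Filter.Tendsto (fun n => (p n : F)) Filter.atTop (nhds 0) := by
    apply squeeze_zero_norm hp2
    have : Filter.Tendsto (fun n => ‖B (x n - z)‖) Filter.atTop (nhds 0) := by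
      simpa using hBtend.norm
    simpa using this.const_mul C
  have hseq : Filter.Tendsto (fun n => A (x n - z - p n)) Filter.atTop (nhds w) := by
    have : (fun n => A (x n - z - p n)) = fun n => A (x n - z) - A (p n) := by
      funext n; rw [map_sub]
    rw [this]
    have hA0 : Filter.Tendsto (fun n => A (p n)) Filter.atTop (nhds 0) := by
      have := (A.continuous.tendsto 0).comp hptend
      simpa [Function.comp_def] using this
    simpa using hlimw.sub hA0
  have hmem : ∀ n, A (x n - z - p n) ∈ (M : Set E) ∩ Set.range ⇑A := by
    intro n
    refine ⟨?_, ⟨_, rfl⟩⟩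
    apply hkerQ
    have : Q (A (x n - z - p n)) = B (x n - z) - B (p n) := by
      simp [hB, map_sub]
    rw [this, hp1, sub_self]
  have hwmem : w ∈ (M : Set E) ∩ Set.range ⇑A :=
    hint.mem_of_tendsto hseq (Filter.Eventually.of_forall hmem)
  rcases hwmem.2 with ⟨v, hv⟩
  exact ⟨v + z, by rw [map_add, hv, hw]; abel⟩


theorem lemC (A : E →L[ℂ] F) (hA : IsClosed (Set.range ⇑A)) :
    IsClosed (Set.range ⇑(ContinuousLinearMap.adjoint A)) := by
  classical
  set K : Submodule ℂ E := LinearMap.ker (A : E →ₗ[ℂ] F) with hK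
  have hKclosed : IsClosed (K : Set E) := ContinuousLinearMap.isClosed_ker A
  haveI : CompleteSpace K := hKclosed.completeSpace_coe
  have hKoc : IsClosed ((Kᗮ : Submodule ℂ E) : Set E) := K.isClosed_orthogonal
  haveI : CompleteSpace Kᗮ := hKoc.completeSpace_coe
  set R : Submodule ℂ F := LinearMap.range (A : E →ₗ[ℂ] F) with hR
  have hRset : (R : Set F) = Set.range ⇑A := by ext y; simp [hR, LinearMap.mem_range]
  have hRclosed : IsClosed (R : Set F) := by rw [hRset]; exact hA
  haveI : CompleteSpace R := hRclosed.completeSpace_coe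
  set A₁ : Kᗮ →L[ℂ] R :=
    (A ∘L Kᗮ.subtypeL).codRestrict R (fun x => LinearMap.mem_range_self _ _) with hA₁
  have hA₁app : ∀ x : Kᗮ, (A₁ x : F) = A x := fun x => rfl
  have hinj : Function.Injective ⇑A₁ := by
    intro a b hab
    have h0 : A ((a : E) - b) = 0 := by
      rw [map_sub]
      have := congrArg Subtype.val hab
      rw [hA₁app, hA₁app] at this
      rw [this, sub_self]
    have hmemK : ((a : E) - b) ∈ K := h0
    have hmemKo : ((a : E) - b) ∈ Kᗮ := Submodule.sub_mem _ a.2 b.2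
    have : ((a : E) - b) = 0 := by
      have := Submodule.mem_orthogonal _ _ |>.mp hmemKo _ hmemK
      exact inner_self_eq_zero.mp this
    exact Subtype.ext (sub_eq_zero.mp this)
  have hsurj : Function.Surjective ⇑A₁ := by
    rintro ⟨y, hy⟩
    rcases hy with ⟨x, hx⟩
    refine ⟨⟨x - (Submodule.orthogonalProjectionOnto K x : E), Submodule.sub_starProjection_mem_orthogonal (K := K) x⟩, ?_⟩
    apply Subtype.ext
    rw [hA₁app]
    have hk : A ((Submodule.orthogonalProjectionOnto K x : E)) = 0 := (Submodule.orthogonalProjectionOnto K x).2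
    rw [map_sub, hk, sub_zero]; exact hx
  obtain ⟨C, hCpos, hC⟩ := A₁.exists_preimage_norm_le hsurj
  have hbound : ∀ x ∈ Kᗮ, ‖x‖ ≤ C * ‖A x‖ := by
    intro x hx
    obtain ⟨x', hx'1, hx'2⟩ := hC (A₁ ⟨x, hx⟩)
    have : x' = ⟨x, hx⟩ := hinj hx'1
    rw [this] at hx'2
    have hnorm : ‖A₁ ⟨x, hx⟩‖ = ‖A x‖ := rfl
    rw [hnorm] at hx'2
    exact hx'2
  -- S = A† ∘ A
  set S : E →L[ℂ] E := (ContinuousLinearMap.adjoint A) ∘L A with hS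
  have hSA : ∀ x, ⟪x, S x⟫ = ⟪A x, A x⟫ := by
    intro x
    rw [hS, ContinuousLinearMap.comp_apply, ContinuousLinearMap.adjoint_inner_right]
  have hSbound : ∀ x ∈ Kᗮ, ‖x‖ ≤ C * C * ‖S x‖ := by
    intro x hx
    rcases eq_or_ne ‖x‖ 0 with h0 | h0
    · rw [h0]
      positivity
    have h1 : ‖x‖ * ‖x‖ ≤ (C * C) * (‖S x‖ * ‖x‖) := by
      calc ‖x‖ * ‖x‖ ≤ (C * ‖A x‖) * (C * ‖A x‖) := by
            apply mul_le_mul (hbound x hx) (hbound x hx) (norm_nonneg x)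
            positivity
        _ = (C * C) * (‖A x‖ * ‖A x‖) := by ring
        _ = (C * C) * ‖⟪A x, A x⟫‖ := by
            congr 1
            rw [inner_self_eq_norm_sq_to_K]
            simp [← sq]
        _ = (C * C) * ‖⟪x, S x⟫‖ := by rw [hSA]
        _ ≤ (C * C) * (‖x‖ * ‖S x‖) := by
            apply mul_le_mul_of_nonneg_left (norm_inner_le_norm x (S x))
            positivity
        _ = (C * C) * (‖S x‖ * ‖x‖) := by ring
    have hxpos : 0 < ‖x‖ := lt_of_le_of_ne (norm_nonneg x) (Ne.symm h0)
    have := (mul_le_mul_iff_left₀ hxpos).mp (by linarith [h1] : ‖x‖ * ‖x‖ ≤ (C * C * ‖S x‖) * ‖x‖)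
    linarith
  -- S restricted to Kᗮ has closed range
  set S₀ : Kᗮ →L[ℂ] E := S ∘L Kᗮ.subtypeL with hS₀
  have hanti : AntilipschitzWith (⟨C * C, by positivity⟩ : NNReal) ⇑S₀ := by
    apply ContinuousLinearMap.antilipschitz_of_bound
    intro x
    have := hSbound (x : E) x.2
    exact this
  have hS₀closed : IsClosed (Set.range ⇑S₀) :=
    hanti.isClosed_range S₀.uniformContinuous
  -- range S₀ = range (adjoint A)
  have hadjker : ∀ w ∈ Rᗮ, ContinuousLinearMap.adjoint A w = 0 := by
    intro w hw
    have h0 : ⟪ContinuousLinearMap.adjoint A w, ContinuousLinearMap.adjoint A w⟫ = 0 := by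
      rw [ContinuousLinearMap.adjoint_inner_left]
      have : A ((ContinuousLinearMap.adjoint A) w) ∈ R := LinearMap.mem_range_self _ _
      exact (Submodule.mem_orthogonal' _ _).mp hw _ this
    exact inner_self_eq_zero.mp h0
  have hrange : Set.range ⇑(ContinuousLinearMap.adjoint A) = Set.range ⇑S₀ := by
    apply Set.Subset.antisymm
    · rintro _ ⟨v, rfl⟩
      have hvdec : ContinuousLinearMap.adjoint A v
          = ContinuousLinearMap.adjoint A ((Submodule.orthogonalProjectionOnto R v : F)) := by
        have hsub : v - (Submodule.orthogonalProjectionOnto R v : F) ∈ Rᗮ :=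
          Submodule.sub_starProjection_mem_orthogonal (K := R) v
        have := hadjker _ hsub
        rw [map_sub] at this
        have := sub_eq_zero.mp this
        exact this.symm ▸ rfl
      rcases (Submodule.orthogonalProjectionOnto R v).2 with ⟨x, hx⟩
      have hxdec : A x = A (x - (Submodule.orthogonalProjectionOnto K x : E)) := by
        rw [map_sub, show A (Submodule.orthogonalProjectionOnto K x : E) = 0 from (Submodule.orthogonalProjectionOnto K x).2, sub_zero]
      refine ⟨⟨x - (Submodule.orthogonalProjectionOnto K x : E), Submodule.sub_starProjection_mem_orthogonal (K := K) x⟩, ?_⟩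
      have : S₀ ⟨x - (Submodule.orthogonalProjectionOnto K x : E), Submodule.sub_starProjection_mem_orthogonal (K := K) x⟩
          = ContinuousLinearMap.adjoint A (A (x - (Submodule.orthogonalProjectionOnto K x : E))) := rfl
      rw [this, ← hxdec, show A x = _ from hx, hvdec]
    · rintro _ ⟨x, rfl⟩
      exact ⟨A (x : E), rfl⟩
  rw [hrange]
  exact hS₀closed

theorem lemCiff (A : E →L[ℂ] F) :
    IsClosed (Set.range ⇑A) ↔ IsClosed (Set.range ⇑(ContinuousLinearMap.adjoint A)) := by
  constructor
  · exact lemC A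
  · intro h
    have := lemC (ContinuousLinearMap.adjoint A) h
    rwa [ContinuousLinearMap.adjoint_adjoint] at this


-- subtype transfer
theorem subtypeClosed {X : Submodule ℂ E} (hX : IsClosed (X : Set E)) (s : Set X) :
    IsClosed s ↔ IsClosed (Subtype.val '' s) := by
  constructor
  · intro h
    exact (hX.isClosedEmbedding_subtypeVal.isClosedMap _ h)
  · intro h
    have : s = Subtype.val ⁻¹' (Subtype.val '' s) := by
      rw [Set.preimage_image_eq _ Subtype.val_injective]
    rw [this]
    exact h.preimage continuous_subtype_val

abbrev PL (E : Type*) := WithLp 2 (E × E)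

def phiP : PL E ≃L[ℂ] E × E := WithLp.prodContinuousLinearEquiv 2 ℂ E E
def fstP : PL E →L[ℂ] E := (ContinuousLinearMap.fst ℂ E E) ∘L (phiP : PL E ≃L[ℂ] E × E).toContinuousLinearMap
def sndP : PL E →L[ℂ] E := (ContinuousLinearMap.snd ℂ E E) ∘L (phiP : PL E ≃L[ℂ] E × E).toContinuousLinearMap
def inlP : E →L[ℂ] PL E := ((phiP (E := E)).symm : (E × E) ≃L[ℂ] PL E).toContinuousLinearMap ∘L (ContinuousLinearMap.inl ℂ E E)
def inrP : E →L[ℂ] PL E := ((phiP (E := E)).symm : (E × E) ≃L[ℂ] PL E).toContinuousLinearMap ∘L (ContinuousLinearMap.inr ℂ E E)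

@[simp] theorem fstP_apply (p : PL E) : fstP p = p.fst := rfl
@[simp] theorem sndP_apply (p : PL E) : sndP p = p.snd := rfl
@[simp] theorem inlP_fst (x : E) : (inlP x : PL E).fst = x := rfl
@[simp] theorem inlP_snd (x : E) : (inlP x : PL E).snd = 0 := rfl
@[simp] theorem inrP_fst (x : E) : (inrP x : PL E).fst = 0 := rfl
@[simp] theorem inrP_snd (x : E) : (inrP x : PL E).snd = x := rfl

theorem pl_ext {p q : PL E} (h1 : p.fst = q.fst) (h2 : p.snd = q.snd) : p = q := by
  exact congrArg (WithLp.toLp 2) (Prod.ext h1 h2)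

theorem adj_sndP : ContinuousLinearMap.adjoint (sndP (E := E)) = inrP := by
  symm
  rw [ContinuousLinearMap.eq_adjoint_iff]
  intro x y
  rw [WithLp.prod_inner_apply]
  simp

set_option linter.unusedSectionVars false

theorem mem_Mz_iff {p : PL E} : p ∈ LinearMap.range ((inrP (E := E)) : E →ₗ[ℂ] PL E) ↔ p.fst = 0 := by
  constructor
  · rintro ⟨y, rfl⟩; simp
  · intro h
    refine ⟨p.snd, ?_⟩
    apply pl_ext <;> simp [h.symm]

theorem Mz_closed : IsClosed ((LinearMap.range ((inrP (E := E)) : E →ₗ[ℂ] PL E) : Submodule ℂ (PL E)) : Set (PL E)) := by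
  have : (LinearMap.range ((inrP (E := E)) : E →ₗ[ℂ] PL E) : Submodule ℂ (PL E)) = LinearMap.ker ((fstP (E := E)) : PL E →ₗ[ℂ] E) := by
    ext p
    rw [mem_Mz_iff, LinearMap.mem_ker]
    exact Iff.rfl
  rw [this]
  exact ContinuousLinearMap.isClosed_ker _

theorem inlP_image_closed_iff (S : Set E) :
    IsClosed (⇑(inlP (E := E)) '' S) ↔ IsClosed S := by
  constructor
  · intro h
    have : S = ⇑(inlP (E := E)) ⁻¹' (⇑(inlP (E := E)) '' S) := by
      rw [Set.preimage_image_eq]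
      intro a b hab
      have := congrArg (fun p : PL E => p.fst) hab
      simpa using this
    rw [this]
    exact h.preimage (inlP (E := E)).continuous
  · intro h
    have hset : ⇑(inlP (E := E)) '' S = (⇑(fstP (E := E)) ⁻¹' S) ∩ {p : PL E | p.snd = 0} := by
      ext p; constructor
      · rintro ⟨x, hx, rfl⟩; exact ⟨by simpa using hx, by simp⟩
      · rintro ⟨h1, h2⟩
        refine ⟨p.fst, h1, ?_⟩
        apply pl_ext
        · simp
        · simpa using h2.symm
    rw [hset]
    apply IsClosed.inter (h.preimage (fstP (E := E)).continuous)
    have : {p : PL E | p.snd = 0} = ⇑(sndP (E := E)) ⁻¹' {0} := rfl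
    rw [this]
    exact isClosed_singleton.preimage (sndP (E := E)).continuous

theorem relCRT (G : Submodule ℂ (PL E)) (hG : IsClosed (G : Set (PL E))) :
    IsClosed (⇑(sndP (E := E)) '' (G : Set (PL E))) ↔
    IsClosed (⇑(fstP (E := E)) '' ((Gᗮ : Submodule ℂ (PL E)) : Set (PL E))) := by
  haveI : CompleteSpace G := hG.completeSpace_coe
  set A : G →L[ℂ] E := (sndP (E := E)) ∘L G.subtypeL with hA
  have hrangeA : Set.range ⇑A = ⇑(sndP (E := E)) '' (G : Set (PL E)) := by
    ext y; constructor
    · rintro ⟨⟨p, hp⟩, rfl⟩; exact ⟨p, hp, rfl⟩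
    · rintro ⟨p, hp, rfl⟩; exact ⟨⟨p, hp⟩, rfl⟩
  have hadjA : ContinuousLinearMap.adjoint A
      = (Submodule.orthogonalProjectionOnto G) ∘L (inrP (E := E)) := by
    rw [hA, ContinuousLinearMap.adjoint_comp, Submodule.adjoint_subtypeL, adj_sndP]
  set pG : PL E →L[ℂ] PL E := G.subtypeL ∘L Submodule.orthogonalProjectionOnto G with hpG
  set Mz : Submodule ℂ (PL E) := LinearMap.range ((inrP (E := E)) : E →ₗ[ℂ] PL E) with hMz
  have himg : Subtype.val '' (Set.range ⇑(ContinuousLinearMap.adjoint A))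
      = ⇑pG '' (Mz : Set (PL E)) := by
    ext z; constructor
    · rintro ⟨_, ⟨y, rfl⟩, rfl⟩
      exact ⟨inrP y, ⟨y, rfl⟩, by rw [hadjA]; rfl⟩
    · rintro ⟨_, ⟨y, rfl⟩, rfl⟩
      exact ⟨ContinuousLinearMap.adjoint A y, ⟨y, rfl⟩, by rw [hadjA]; rfl⟩
  -- lemA applications
  have hlemA1 : IsClosed ((Gᗮ ⊔ Mz : Submodule ℂ (PL E)) : Set (PL E))
      ↔ IsClosed (⇑pG '' (Mz : Set (PL E))) := by
    apply lemA Gᗮ G.isClosed_orthogonal pG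
    · intro p
      exact Submodule.sub_starProjection_mem_orthogonal (K := G) p
    · intro p z hz
      exact (Submodule.mem_orthogonal _ _).mp hz _ (Submodule.coe_mem (Submodule.orthogonalProjectionOnto G p))
  set qP : PL E →L[ℂ] PL E := (inlP (E := E)) ∘L (fstP (E := E)) with hqP
  have hlemA2 : IsClosed ((Mz ⊔ Gᗮ : Submodule ℂ (PL E)) : Set (PL E))
      ↔ IsClosed (⇑qP '' ((Gᗮ : Submodule ℂ (PL E)) : Set (PL E))) := by
    apply lemA Mz Mz_closed qP
    · intro p
      rw [hMz, mem_Mz_iff]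
      show (p - inlP p.fst).fst = 0
      show p.fst - (inlP p.fst : PL E).fst = 0
      simp
    · intro p z hz
      rw [hMz, mem_Mz_iff] at hz
      rw [WithLp.prod_inner_apply]
      show (⟪(inlP p.fst : PL E).fst, z.fst⟫ : ℂ) + ⟪(inlP p.fst : PL E).snd, z.snd⟫ = 0
      rw [hz]
      simp
  have hqimg : ⇑qP '' ((Gᗮ : Submodule ℂ (PL E)) : Set (PL E))
      = ⇑(inlP (E := E)) '' (⇑(fstP (E := E)) '' ((Gᗮ : Submodule ℂ (PL E)) : Set (PL E))) := by
    rw [Set.image_image]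
    rfl
  calc IsClosed (⇑(sndP (E := E)) '' (G : Set (PL E)))
      ↔ IsClosed (Set.range ⇑A) := by rw [hrangeA]
    _ ↔ IsClosed (Set.range ⇑(ContinuousLinearMap.adjoint A)) := lemCiff A
    _ ↔ IsClosed (Subtype.val '' (Set.range ⇑(ContinuousLinearMap.adjoint A))) :=
        subtypeClosed hG _
    _ ↔ IsClosed (⇑pG '' (Mz : Set (PL E))) := by rw [himg]
    _ ↔ IsClosed ((Gᗮ ⊔ Mz : Submodule ℂ (PL E)) : Set (PL E)) := hlemA1.symm
    _ ↔ IsClosed ((Mz ⊔ Gᗮ : Submodule ℂ (PL E)) : Set (PL E)) := by rw [sup_comm]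
    _ ↔ IsClosed (⇑qP '' ((Gᗮ : Submodule ℂ (PL E)) : Set (PL E))) := hlemA2
    _ ↔ IsClosed (⇑(fstP (E := E)) '' ((Gᗮ : Submodule ℂ (PL E)) : Set (PL E))) := by
        rw [hqimg]; exact inlP_image_closed_iff _


end AuxGeneral

section AuxMain
set_option linter.unusedSectionVars false
set_option maxHeartbeats 1000000

def fSh (l : ℂ) : (H × H) →L[ℂ] H :=
  ContinuousLinearMap.snd ℂ H H - l • ContinuousLinearMap.fst ℂ H H
@[simp] theorem fSh_apply (l : ℂ) (p : H × H) : fSh l p = p.2 - l • p.1 := rfl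

def gM (l : ℂ) : (H × H) →L[ℂ] H :=
  ContinuousLinearMap.fst ℂ H H + l • ContinuousLinearMap.snd ℂ H H
@[simp] theorem gM_apply (l : ℂ) (p : H × H) : gM l p = p.1 + l • p.2 := rfl

def jPr (J : H →L[ℂ] H) : (H × H) →L[ℂ] (H × H) := (ContinuousLinearMap.id ℂ H).prodMap J
@[simp] theorem jPr_apply (J : H →L[ℂ] H) (p : H × H) : jPr J p = (p.1, J p.2) := rfl

def wM (J : H →L[ℂ] H) : (H × H) →L[ℂ] (H × H) :=
  (-(J ∘L ContinuousLinearMap.snd ℂ H H)).prod (J ∘L ContinuousLinearMap.fst ℂ H H)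
@[simp] theorem wM_apply (J : H →L[ℂ] H) (p : H × H) : wM J p = (-(J p.2), J p.1) := rfl

def eSh (l : ℂ) : (H × H) →L[ℂ] (H × H) := (ContinuousLinearMap.fst ℂ H H).prod (fSh l)
@[simp] theorem eSh_apply (l : ℂ) (p : H × H) : eSh l p = (p.1, p.2 - l • p.1) := rfl

def eH (l : ℂ) : (H × H) →L[ℂ] (H × H) := (gM l).prod (ContinuousLinearMap.snd ℂ H H)
@[simp] theorem eH_apply (l : ℂ) (p : H × H) : eH l p = (p.1 + l • p.2, p.2) := rfl

def PpL (J : H →L[ℂ] H) : H →L[ℂ] H := (2⁻¹ : ℂ) • (ContinuousLinearMap.id ℂ H + J)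
@[simp] theorem PpL_apply (J : H →L[ℂ] H) (x : H) : PpL J x = (2⁻¹ : ℂ) • (x + J x) := rfl
def PmL (J : H →L[ℂ] H) : H →L[ℂ] H := (2⁻¹ : ℂ) • (ContinuousLinearMap.id ℂ H - J)
@[simp] theorem PmL_apply (J : H →L[ℂ] H) (x : H) : PmL J x = (2⁻¹ : ℂ) • (x - J x) := rfl

-- submodules H⁻, H⁺
def HmS (J : H →L[ℂ] H) : Submodule ℂ H where
  carrier := negSet J
  add_mem' := by
    intro a b ha hb
    simp only [negSet, Set.mem_setOf_eq] at *
    rw [map_add, ha, hb]; abel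
  zero_mem' := by simp [negSet]
  smul_mem' := by
    intro c x hx
    simp only [negSet, Set.mem_setOf_eq] at *
    rw [map_smul, hx, smul_neg]

def HpS (J : H →L[ℂ] H) : Submodule ℂ H where
  carrier := posSet J
  add_mem' := by
    intro a b ha hb
    simp only [posSet, Set.mem_setOf_eq] at *
    rw [map_add, ha, hb]
  zero_mem' := by simp [posSet]
  smul_mem' := by
    intro c x hx
    simp only [posSet, Set.mem_setOf_eq] at *
    rw [map_smul, hx]

theorem HmS_closed (J : H →L[ℂ] H) : IsClosed ((HmS J : Submodule ℂ H) : Set H) := by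
  have : ((HmS J : Submodule ℂ H) : Set H) = (fun x => J x + x) ⁻¹' {0} := by
    ext x
    simp only [Set.mem_preimage, Set.mem_singleton_iff]
    show J x = -x ↔ _
    constructor
    · intro h; rw [h]; abel
    · intro h
      have : J x = (J x + x) - x := by abel
      rw [this, h, zero_sub]
  rw [this]
  exact isClosed_singleton.preimage (J.continuous.add continuous_id)

theorem HpS_closed (J : H →L[ℂ] H) : IsClosed ((HpS J : Submodule ℂ H) : Set H) := by
  have : ((HpS J : Submodule ℂ H) : Set H) = (fun x => J x - x) ⁻¹' {0} := by
    ext x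
    simp only [Set.mem_preimage, Set.mem_singleton_iff]
    show J x = x ↔ _
    constructor
    · intro h; rw [h]; abel
    · intro h
      have : J x = (J x - x) + x := by abel
      rw [this, h, zero_add]
  rw [this]
  exact isClosed_singleton.preimage (J.continuous.sub continuous_id)


theorem ranSet_shift (A : Set (H × H)) (l : ℂ) : ranSet (shiftRel A l) = ⇑(fSh l) '' A := by
  ext y; constructor
  · rintro ⟨x, q, hq, hxy⟩
    have h2 := congrArg Prod.snd hxy
    exact ⟨q, hq, by simpa using h2.symm⟩
  · rintro ⟨q, hq, rfl⟩
    exact ⟨q.1, q, hq, by simp⟩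

theorem JRel_eq (J : H →L[ℂ] H) (A : Set (H × H)) : JRel J A = ⇑(jPr J) '' A := by
  ext p; constructor
  · rintro ⟨q, hq, rfl⟩; exact ⟨q, hq, by simp⟩
  · rintro ⟨q, hq, rfl⟩; exact ⟨q, hq, by simp⟩

theorem setSum_eq (A B : Submodule ℂ H) :
    setSum (A : Set H) (B : Set H) = ((A ⊔ B : Submodule ℂ H) : Set H) := by
  ext z; constructor
  · rintro ⟨a, ha, b, hb, rfl⟩
    exact Submodule.mem_sup.mpr ⟨a, ha, b, hb, rfl⟩
  · intro hz
    rcases Submodule.mem_sup.mp hz with ⟨a, ha, b, hb, hab⟩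
    exact ⟨a, ha, b, hb, hab.symm⟩

theorem image_closed_iff_of_inverse {X Y : Type*} [TopologicalSpace X] [TopologicalSpace Y]
    {f : X → Y} {g : Y → X} (hf : Continuous f) (hg : Continuous g)
    (hgf : ∀ x, g (f x) = x) (hfg : ∀ y, f (g y) = y) (s : Set X) :
    IsClosed (f '' s) ↔ IsClosed s := by
  have him : f '' s = g ⁻¹' s := congrFun (Set.image_eq_preimage_of_inverse hgf hfg) s
  constructor
  · intro h
    have : s = f ⁻¹' (f '' s) := by
      rw [Set.preimage_image_eq]
      intro a b hab
      have := congrArg g hab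
      rwa [hgf, hgf] at this
    rw [this]
    exact h.preimage hf
  · intro h
    rw [him]
    exact h.preimage hg

theorem Jimage_closed_iff {J : H →L[ℂ] H} (hJ : IsFundSym J) (s : Set H) :
    IsClosed (⇑J '' s) ↔ IsClosed s :=
  image_closed_iff_of_inverse J.continuous J.continuous hJ.invol hJ.invol s

theorem range_comp_subtypeL {X Y : Type*} [NormedAddCommGroup X] [NormedSpace ℂ X]
    [NormedAddCommGroup Y] [NormedSpace ℂ Y] (p : Submodule ℂ X) (c : X →L[ℂ] Y) :
    LinearMap.range ((c ∘L p.subtypeL) : p →ₗ[ℂ] Y) = Submodule.map (c : X →ₗ[ℂ] Y) p := by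
  ext y
  simp only [LinearMap.mem_range, Submodule.mem_map]
  constructor
  · rintro ⟨⟨x, hx⟩, rfl⟩; exact ⟨x, hx, rfl⟩
  · rintro ⟨x, hx, rfl⟩; exact ⟨⟨x, hx⟩, rfl⟩

def T2of (T : Submodule ℂ (H × H)) : Submodule ℂ (PL H) :=
  T.comap ((phiP (E := H)).toContinuousLinearMap : PL H →ₗ[ℂ] H × H)

theorem mem_T2of {T : Submodule ℂ (H × H)} {u : PL H} :
    u ∈ T2of T ↔ phiP (E := H) u ∈ T := Iff.rfl

theorem T2of_coe (T : Submodule ℂ (H × H)) :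
    ((T2of T : Submodule ℂ (PL H)) : Set (PL H)) = ⇑(phiP (E := H)) ⁻¹' (T : Set (H × H)) := rfl

theorem T2of_image (T : Submodule ℂ (H × H)) :
    ⇑(phiP (E := H)) '' ((T2of T : Submodule ℂ (PL H)) : Set (PL H)) = (T : Set (H × H)) := by
  rw [T2of_coe]
  exact Set.image_preimage_eq _ (phiP (E := H)).surjective

theorem innerP (u v : PL H) :
    (inner ℂ u v : ℂ) = inner ℂ (phiP (E := H) u).1 (phiP (E := H) v).1
      + inner ℂ (phiP (E := H) u).2 (phiP (E := H) v).2 := rfl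

theorem adjRel_eq {J : H →L[ℂ] H} (hJ : IsFundSym J) (T : Submodule ℂ (H × H)) :
    adjRel J (T : Set (H × H)) =
      (⇑(wM J) ∘ ⇑(phiP (E := H))) '' (((T2of T)ᗮ : Submodule ℂ (PL H)) : Set (PL H)) := by
  have key : ∀ q : H × H, q ∈ adjRel J (T : Set (H × H)) ↔
      (phiP (E := H)).symm (J q.2, -(J q.1)) ∈ (T2of T)ᗮ := by
    intro q
    rw [Submodule.mem_orthogonal]
    constructor
    · intro hq u hu
      have hp := hq (phiP (E := H) u) (mem_T2of.mp hu)
      rw [innerP]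
      simp only [ContinuousLinearEquiv.apply_symm_apply]
      unfold kip at hp
      have e1 : (inner ℂ (phiP (E := H) u).1 (J q.2) : ℂ)
          = (starRingEnd ℂ) (inner ℂ q.2 (J (phiP (E := H) u).1)) := by
        rw [← inner_conj_symm, ← hJ.symm]
      have e2 : (inner ℂ (phiP (E := H) u).2 (-(J q.1)) : ℂ)
          = -(starRingEnd ℂ) (inner ℂ q.1 (J (phiP (E := H) u).2)) := by
        rw [inner_neg_right, ← inner_conj_symm, ← hJ.symm]
      rw [e1, e2, hp]
      ring
    · intro hq p hp
      have hu := hq ((phiP (E := H)).symm p) (by rw [mem_T2of]; simpa using hp)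
      rw [innerP] at hu
      simp only [ContinuousLinearEquiv.apply_symm_apply] at hu
      unfold kip
      have e1 : (inner ℂ p.1 (J q.2) : ℂ)
          = (starRingEnd ℂ) (inner ℂ q.2 (J p.1)) := by
        rw [← inner_conj_symm, ← hJ.symm]
      have e2 : (inner ℂ p.2 (-(J q.1)) : ℂ)
          = -(starRingEnd ℂ) (inner ℂ q.1 (J p.2)) := by
        rw [inner_neg_right, ← inner_conj_symm, ← hJ.symm]
      rw [e1, e2] at hu
      have : (starRingEnd ℂ) (inner ℂ q.2 (J p.1)) = (starRingEnd ℂ) (inner ℂ q.1 (J p.2)) := by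
        linear_combination hu
      have := congrArg (starRingEnd ℂ) this
      simpa using this
  ext q
  rw [key]
  constructor
  · intro hz
    refine ⟨(phiP (E := H)).symm (J q.2, -(J q.1)), hz, ?_⟩
    simp only [Function.comp_apply, ContinuousLinearEquiv.apply_symm_apply, wM_apply]
    simp [hJ.invol, map_neg]
  · rintro ⟨u, hu, rfl⟩
    have heq : (phiP (E := H)).symm
        (J ((wM J) (phiP (E := H) u)).2, -(J ((wM J) (phiP (E := H) u)).1)) = u := by
      apply (phiP (E := H)).symm_apply_eq.mpr
      show (J ((wM J) (phiP (E := H) u)).2, -(J ((wM J) (phiP (E := H) u)).1))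
          = phiP (E := H) u
      simp [hJ.invol, map_neg]
    show (phiP (E := H)).symm
        (J ((wM J ∘ ⇑(phiP (E := H))) u).2, -(J ((wM J ∘ ⇑(phiP (E := H))) u).1)) ∈ _
    rw [Function.comp_apply, heq]
    exact hu

theorem PpL_J {J : H →L[ℂ] H} (hJ : IsFundSym J) (x : H) : PpL J (J x) = PpL J x := by
  simp only [PpL_apply, hJ.invol]
  rw [add_comm]

theorem PmL_J {J : H →L[ℂ] H} (hJ : IsFundSym J) (x : H) : PmL J (J x) = -(PmL J x) := by
  simp only [PmL_apply, hJ.invol]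
  rw [← smul_neg, neg_sub]

theorem J_PpL {J : H →L[ℂ] H} (hJ : IsFundSym J) (x : H) : J (PpL J x) = PpL J x := by
  simp only [PpL_apply, map_smul, map_add, hJ.invol]
  rw [add_comm]

theorem J_PmL {J : H →L[ℂ] H} (hJ : IsFundSym J) (x : H) : J (PmL J x) = -(PmL J x) := by
  simp only [PmL_apply, map_smul, map_sub, hJ.invol]
  rw [← smul_neg, neg_sub]

theorem PpL_mem {J : H →L[ℂ] H} (hJ : IsFundSym J) (x : H) : x - PpL J x ∈ HmS J := by
  show J (x - PpL J x) = -(x - PpL J x)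
  simp only [PpL_apply, map_sub, map_smul, map_add, hJ.invol]
  module

theorem PmL_mem {J : H →L[ℂ] H} (hJ : IsFundSym J) (x : H) : x - PmL J x ∈ HpS J := by
  show J (x - PmL J x) = x - PmL J x
  simp only [PmL_apply, map_sub, map_smul, hJ.invol]
  module

theorem PpL_orth {J : H →L[ℂ] H} (hJ : IsFundSym J) (x : H) :
    ∀ z ∈ HmS J, (inner ℂ (PpL J x) z : ℂ) = 0 := by
  intro z hz
  have hz' : J z = -z := hz
  have h1 : (inner ℂ (PpL J x) z : ℂ) = inner ℂ (J (PpL J x)) z := by rw [J_PpL hJ]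
  rw [hJ.symm, hz', inner_neg_right] at h1
  have : (2 : ℂ) * inner ℂ (PpL J x) z = 0 := by linear_combination h1
  have h2 : (2 : ℂ) ≠ 0 := two_ne_zero
  exact (mul_eq_zero.mp this).resolve_left h2

theorem PmL_orth {J : H →L[ℂ] H} (hJ : IsFundSym J) (x : H) :
    ∀ z ∈ HpS J, (inner ℂ (PmL J x) z : ℂ) = 0 := by
  intro z hz
  have hz' : J z = z := hz
  have h1 : (inner ℂ (PmL J x) z : ℂ) = - inner ℂ (J (PmL J x)) z := by
    rw [J_PmL hJ, inner_neg_left, neg_neg]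
  rw [hJ.symm, hz'] at h1
  have : (2 : ℂ) * inner ℂ (PmL J x) z = 0 := by linear_combination h1
  have h2 : (2 : ℂ) ≠ 0 := two_ne_zero
  exact (mul_eq_zero.mp this).resolve_left h2

theorem image_neg_eq {X Y : Type*} [NormedAddCommGroup X] [NormedSpace ℂ X]
    [NormedAddCommGroup Y] [NormedSpace ℂ Y] (c₁ c₂ : X →L[ℂ] Y)
    (hneg : ∀ x, c₁ x = -(c₂ x)) (p : Submodule ℂ X) :
    ⇑c₁ '' (p : Set X) = ⇑c₂ '' (p : Set X) := by
  ext y; constructor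
  · rintro ⟨u, hu, rfl⟩
    exact ⟨-u, p.neg_mem hu, by simp [hneg]⟩
  · rintro ⟨u, hu, rfl⟩
    exact ⟨-u, p.neg_mem hu, by simp [hneg]⟩

/-- Lemma 6.2: fix `λ ≠ 0` with `H⁻ + R_{JT^c − λ̄I}` closed. Then `R_{T−λI}` is closed
iff `H⁻ ∩ R_{T^c − λ̄I}` is closed; if also `H⁺ + R_{JT + λI}` is closed, then
`R_{T−λI}` is closed iff `H⁺ ∩ R_{T−λI}` is closed. -/
theorem statement18 (J : H →L[ℂ] H) (hJ : IsFundSym J)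
    (T : Submodule ℂ (H × H))
    (hTclosed : IsClosed (T : Set (H × H)))
    (l : ℂ) (hl0 : l ≠ 0)
    (h1 : IsClosed (setSum (negSet J)
      (ranSet (shiftRel (JRel J (adjRel J (T : Set (H × H)))) ((starRingEnd ℂ) l))))) :
    (IsClosed (ranSet (shiftRel (T : Set (H × H)) l)) ↔
      IsClosed (negSet J ∩ ranSet (shiftRel (adjRel J (T : Set (H × H))) ((starRingEnd ℂ) l)))) ∧
    (IsClosed (setSum (posSet J) (ranSet (shiftRel (JRel J (T : Set (H × H))) (-l)))) →
      (IsClosed (ranSet (shiftRel (T : Set (H × H)) l)) ↔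
        IsClosed (posSet J ∩ ranSet (shiftRel (T : Set (H × H)) l)))) := by
  classical
  set lbar := (starRingEnd ℂ) l with hlbar
  set φL := ((phiP (E := H)).toContinuousLinearMap : PL H →L[ℂ] H × H) with hφL
  set T2 := T2of T with hT2
  have hT2closed : IsClosed ((T2 : Submodule ℂ (PL H)) : Set (PL H)) := by
    rw [hT2, T2of_coe]
    exact hTclosed.preimage (phiP (E := H)).continuous
  have hT2pclosed : IsClosed ((T2ᗮ : Submodule ℂ (PL H)) : Set (PL H)) :=
    T2.isClosed_orthogonal
  haveI : CompleteSpace T2ᗮ := hT2pclosed.completeSpace_coe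
  haveI : CompleteSpace T2 := hT2closed.completeSpace_coe
  -- the key submodules of H
  set Rr : Submodule ℂ H := Submodule.map (((fSh l) ∘L φL) : PL H →ₗ[ℂ] H) T2 with hRr
  set Dm : Submodule ℂ H := Submodule.map (((gM lbar) ∘L φL) : PL H →ₗ[ℂ] H) T2ᗮ with hDm
  set Nn : Submodule ℂ H := Submodule.map (((J ∘L gM lbar) ∘L φL) : PL H →ₗ[ℂ] H) T2ᗮ with hNn
  set Kk : Submodule ℂ H := Submodule.map (((gM lbar ∘L jPr J) ∘L φL) : PL H →ₗ[ℂ] H) T2ᗮ with hKk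
  set Kk2 : Submodule ℂ H := Submodule.map (((fSh (-l) ∘L jPr J) ∘L φL) : PL H →ₗ[ℂ] H) T2 with hKk2
  -- set translations
  have hranR : ranSet (shiftRel (T : Set (H × H)) l) = (Rr : Set H) := by
    rw [ranSet_shift, ← T2of_image T, Set.image_image, hRr, Submodule.map_coe, ← hT2]
    rfl
  have hranN : ranSet (shiftRel (adjRel J (T : Set (H × H))) lbar) = (Nn : Set H) := by
    rw [ranSet_shift, adjRel_eq hJ T, Set.image_image, hNn, Submodule.map_coe, ContinuousLinearMap.coe_coe, ← hT2]
    have hfun : (fun u : PL H => fSh lbar ((⇑(wM J) ∘ ⇑(phiP (E := H))) u))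
        = ⇑((J ∘L gM lbar) ∘L φL) := by
      funext u
      show fSh lbar (wM J (phiP (E := H) u)) = J (gM lbar (phiP (E := H) u))
      simp only [wM_apply, fSh_apply, gM_apply, map_add, map_smul]
      rw [smul_neg, sub_neg_eq_add]
    rw [hfun]
  have hranK : ranSet (shiftRel (JRel J (adjRel J (T : Set (H × H)))) lbar) = (Kk : Set H) := by
    rw [ranSet_shift, JRel_eq, adjRel_eq hJ T, Set.image_image, Set.image_image,
      hKk, Submodule.map_coe, ContinuousLinearMap.coe_coe, ← hT2]
    have hfun : (fun u : PL H => fSh lbar (jPr J ((⇑(wM J) ∘ ⇑(phiP (E := H))) u)))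
        = ⇑((gM lbar ∘L jPr J) ∘L φL) := by
      funext u
      show fSh lbar (jPr J (wM J (phiP (E := H) u)))
          = gM lbar (jPr J (phiP (E := H) u))
      simp only [wM_apply, jPr_apply, fSh_apply, gM_apply, hJ.invol]
      rw [smul_neg, sub_neg_eq_add]
    rw [hfun]
  have hranK2 : ranSet (shiftRel (JRel J (T : Set (H × H))) (-l)) = (Kk2 : Set H) := by
    rw [ranSet_shift, JRel_eq, ← T2of_image T, Set.image_image, Set.image_image,
      hKk2, Submodule.map_coe, ← hT2]
    rfl
  have hsetHm : negSet J = ((HmS J : Submodule ℂ H) : Set H) := rfl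
  have hsetHp : posSet J = ((HpS J : Submodule ℂ H) : Set H) := rfl
  -- CRT via the graph G
  set c1 : PL H →L[ℂ] PL H :=
    ((phiP (E := H)).symm.toContinuousLinearMap) ∘L ((eSh l) ∘L φL) with hc1
  set c1' : PL H →L[ℂ] PL H :=
    ((phiP (E := H)).symm.toContinuousLinearMap) ∘L ((eSh (-l)) ∘L φL) with hc1'
  set c2 : PL H →L[ℂ] PL H :=
    ((phiP (E := H)).symm.toContinuousLinearMap) ∘L ((eH lbar) ∘L φL) with hc2
  set c2' : PL H →L[ℂ] PL H :=
    ((phiP (E := H)).symm.toContinuousLinearMap) ∘L ((eH (-lbar)) ∘L φL) with hc2'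
  have hc1inv : ∀ u, c1' (c1 u) = u := by
    intro u
    show (phiP (E := H)).symm (eSh (-l) (phiP (E := H)
      ((phiP (E := H)).symm (eSh l (phiP (E := H) u))))) = u
    rw [ContinuousLinearEquiv.apply_symm_apply]
    have : eSh (-l) (eSh l (phiP (E := H) u)) = phiP (E := H) u := by
      simp only [eSh_apply, neg_smul, sub_neg_eq_add, sub_add_cancel]
    rw [this, ContinuousLinearEquiv.symm_apply_apply]
  have hc1inv' : ∀ u, c1 (c1' u) = u := by
    intro u
    show (phiP (E := H)).symm (eSh l (phiP (E := H)
      ((phiP (E := H)).symm (eSh (-l) (phiP (E := H) u))))) = u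
    rw [ContinuousLinearEquiv.apply_symm_apply]
    have : eSh l (eSh (-l) (phiP (E := H) u)) = phiP (E := H) u := by
      simp only [eSh_apply, neg_smul, sub_neg_eq_add, add_sub_cancel_right]
    rw [this, ContinuousLinearEquiv.symm_apply_apply]
  have hc2inv : ∀ u, c2 (c2' u) = u := by
    intro u
    show (phiP (E := H)).symm (eH lbar (phiP (E := H)
      ((phiP (E := H)).symm (eH (-lbar) (phiP (E := H) u))))) = u
    rw [ContinuousLinearEquiv.apply_symm_apply]
    have : eH lbar (eH (-lbar) (phiP (E := H) u)) = phiP (E := H) u := by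
      simp only [eH_apply, neg_smul]
      exact Prod.ext (by module) rfl
    rw [this, ContinuousLinearEquiv.symm_apply_apply]
  have hc2inv' : ∀ u, c2' (c2 u) = u := by
    intro u
    show (phiP (E := H)).symm (eH (-lbar) (phiP (E := H)
      ((phiP (E := H)).symm (eH lbar (phiP (E := H) u))))) = u
    rw [ContinuousLinearEquiv.apply_symm_apply]
    have : eH (-lbar) (eH lbar (phiP (E := H) u)) = phiP (E := H) u := by
      simp only [eH_apply, neg_smul]
      exact Prod.ext (by module) rfl
    rw [this, ContinuousLinearEquiv.symm_apply_apply]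
  set G : Submodule ℂ (PL H) := Submodule.map (c1 : PL H →ₗ[ℂ] PL H) T2 with hG
  have hGcoe : (G : Set (PL H)) = ⇑c1 '' (T2 : Set (PL H)) := Submodule.map_coe _ _
  have hGclosed : IsClosed (G : Set (PL H)) := by
    rw [hGcoe]
    exact (image_closed_iff_of_inverse c1.continuous c1'.continuous hc1inv hc1inv'
      (T2 : Set (PL H))).mpr hT2closed
  -- Gᗮ
  have hadj : ∀ t q : PL H, (inner ℂ (c1 t) q : ℂ) = inner ℂ t (c2' q) := by
    intro t q
    rw [innerP, innerP]
    show (inner ℂ (eSh l (phiP (E := H) t)).1 (phiP (E := H) q).1 : ℂ)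
        + inner ℂ (eSh l (phiP (E := H) t)).2 (phiP (E := H) q).2
        = inner ℂ (phiP (E := H) t).1 (eH (-lbar) (phiP (E := H) q)).1
        + inner ℂ (phiP (E := H) t).2 (eH (-lbar) (phiP (E := H) q)).2
    simp only [eSh_apply, eH_apply, inner_sub_left, inner_smul_left, inner_add_right,
      inner_smul_right, neg_smul, inner_neg_right]
    rw [← hlbar]
    ring
  have hGperp : (Gᗮ : Submodule ℂ (PL H)) = Submodule.map (c2 : PL H →ₗ[ℂ] PL H) T2ᗮ := by
    ext q
    rw [Submodule.mem_orthogonal]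
    constructor
    · intro hq
      have hmem : c2' q ∈ T2ᗮ := by
        rw [Submodule.mem_orthogonal]
        intro t ht
        rw [← hadj]
        exact hq (c1 t) (Submodule.mem_map_of_mem ht)
      exact ⟨c2' q, hmem, hc2inv q⟩
    · rintro ⟨v, hv, rfl⟩ u hu
      rcases Submodule.mem_map.mp hu with ⟨t, ht, rfl⟩
      rw [ContinuousLinearMap.coe_coe, hadj, ContinuousLinearMap.coe_coe, hc2inv']
      exact (Submodule.mem_orthogonal _ _).mp hv t ht
  have hsndG : ⇑(sndP (E := H)) '' (G : Set (PL H)) = (Rr : Set H) := by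
    rw [hGcoe, Set.image_image, hRr, Submodule.map_coe]
    rfl
  have hfstGperp : ⇑(fstP (E := H)) '' ((Gᗮ : Submodule ℂ (PL H)) : Set (PL H))
      = (Dm : Set H) := by
    rw [hGperp, Submodule.map_coe, Set.image_image, hDm, Submodule.map_coe]
    rfl
  have hCRT : IsClosed (Rr : Set H) ↔ IsClosed (Dm : Set H) := by
    rw [← hsndG, ← hfstGperp]
    exact relCRT G hGclosed
  have hND : (Nn : Set H) = ⇑J '' (Dm : Set H) := by
    rw [hNn, hDm, Submodule.map_coe, Submodule.map_coe, Set.image_image]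
    rfl
  have hRN : IsClosed (Rr : Set H) ↔ IsClosed (Nn : Set H) := by
    rw [hND]
    exact hCRT.trans (Jimage_closed_iff hJ _).symm
  -- translate h1
  have h1' : IsClosed ((HmS J ⊔ Kk : Submodule ℂ H) : Set H) := by
    rw [hsetHm, hranK, setSum_eq] at h1
    exact h1
  have hKkPp : ⇑(PpL J) '' (Kk : Set H) = ⇑(PpL J) '' (Nn : Set H) := by
    rw [hKk, hNn, Submodule.map_coe, Submodule.map_coe, ContinuousLinearMap.coe_coe, ContinuousLinearMap.coe_coe, Set.image_image, Set.image_image]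
    have hfun : (fun u : PL H => PpL J (((gM lbar ∘L jPr J) ∘L φL) u))
        = fun u : PL H => PpL J (((J ∘L gM lbar) ∘L φL) u) := by
      funext u
      show PpL J ((phiP (E := H) u).1 + lbar • J (phiP (E := H) u).2)
          = PpL J (J ((phiP (E := H) u).1 + lbar • (phiP (E := H) u).2))
      simp only [map_add, map_smul, PpL_J hJ]
    rw [hfun]
  have hsupN : IsClosed ((HmS J ⊔ Nn : Submodule ℂ H) : Set H) := by
    have h2 := (lemA (HmS J) (HmS_closed J) (PpL J) (PpL_mem hJ) (PpL_orth hJ) Kk).mp h1'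
    rw [hKkPp] at h2
    exact (lemA (HmS J) (HmS_closed J) (PpL J) (PpL_mem hJ) (PpL_orth hJ) Nn).mpr h2
  constructor
  · -- part 1
    rw [hranR, hranN, hsetHm]
    constructor
    · intro h
      exact (HmS_closed J).inter (hRN.mp h)
    · intro h
      set A : T2ᗮ →L[ℂ] H := ((J ∘L gM lbar) ∘L φL) ∘L (T2ᗮ).subtypeL with hA
      have hrangeA : LinearMap.range (A : T2ᗮ →ₗ[ℂ] H) = Nn := by
        rw [hA, range_comp_subtypeL, hNn]
      have hrangeAset : Set.range ⇑A = (Nn : Set H) := by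
        rw [← hrangeA]
        ext y
        simp [LinearMap.mem_range]
      have hcl := lemB (HmS J) (HmS_closed J) (PpL J) (PpL_mem hJ) (PpL_orth hJ) A
        (by rw [hrangeA]; exact hsupN) (by rw [hrangeAset]; exact h)
      rw [hrangeAset] at hcl
      exact hRN.mpr hcl
  · -- part 2
    intro h2
    rw [hsetHp, hranK2, setSum_eq] at h2
    rw [hranR, hsetHp]
    have hKk2Pm : ⇑(PmL J) '' (Kk2 : Set H) = ⇑(PmL J) '' (Rr : Set H) := by
      rw [hKk2, hRr, Submodule.map_coe, Submodule.map_coe, ContinuousLinearMap.coe_coe, ContinuousLinearMap.coe_coe, Set.image_image, Set.image_image]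
      have himg1 : (fun u : PL H => PmL J (((fSh (-l) ∘L jPr J) ∘L φL) u)) '' (T2 : Set (PL H))
          = ⇑(PmL J ∘L ((fSh (-l) ∘L jPr J) ∘L φL)) '' (T2 : Set (PL H)) := rfl
      have himg2 : (fun u : PL H => PmL J (((fSh l) ∘L φL) u)) '' (T2 : Set (PL H))
          = ⇑(PmL J ∘L ((fSh l) ∘L φL)) '' (T2 : Set (PL H)) := rfl
      rw [himg1, himg2]
      apply image_neg_eq
      intro u
      show PmL J (J (phiP (E := H) u).2 - (-l) • (phiP (E := H) u).1)
          = -(PmL J ((phiP (E := H) u).2 - l • (phiP (E := H) u).1))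
      simp only [map_sub, map_add, map_smul, neg_smul, sub_neg_eq_add, PmL_J hJ, neg_sub]
      module
    have hsupR : IsClosed ((HpS J ⊔ Rr : Submodule ℂ H) : Set H) := by
      have h3 := (lemA (HpS J) (HpS_closed J) (PmL J) (PmL_mem hJ) (PmL_orth hJ) Kk2).mp h2
      rw [hKk2Pm] at h3
      exact (lemA (HpS J) (HpS_closed J) (PmL J) (PmL_mem hJ) (PmL_orth hJ) Rr).mpr h3
    constructor
    · intro h
      exact (HpS_closed J).inter h
    · intro h
      set A2 : T2 →L[ℂ] H := ((fSh l) ∘L φL) ∘L T2.subtypeL with hA2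
      have hrangeA2 : LinearMap.range (A2 : T2 →ₗ[ℂ] H) = Rr := by
        rw [hA2, range_comp_subtypeL, hRr]
      have hrangeA2set : Set.range ⇑A2 = (Rr : Set H) := by
        rw [← hrangeA2]
        ext y
        simp [LinearMap.mem_range]
      have hcl := lemB (HpS J) (HpS_closed J) (PmL J) (PmL_mem hJ) (PmL_orth hJ) A2
        (by rw [hrangeA2]; exact hsupR) (by rw [hrangeA2set]; exact h)
      rw [hrangeA2set] at hcl
      exact hcl


end AuxMain
end
end
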